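/- arXiv:1301.6585 — 10 statements merged into one kernel-verified Lean document; each statement's English description precedes it below -/
import Mathlib

section
/- Let ν, ν', γ, γ' be probability measures on a measurable space and ε > 0 be such that ν(A) ≥ ε·γ(A) and ν'(A) ≥ ε·γ'(A) for every measurable set A. Then the total variation distance satisfies ‖ν − ν'‖ ≤ 2(1 − ε) + ε‖γ − γ'‖, where ‖μ − μ'‖ := sup over measurable f with |f| ≤ 1 of |μ(f) − μ'(f)|. In particular, if γ = γ', then ‖ν − ν'‖ ≤ 2(1 − ε). -/
open MeasureTheory


lemma aux_decomp {X : Type*} [MeasurableSpace X] (ν γ : Measure X)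
    [IsProbabilityMeasure ν] [IsProbabilityMeasure γ]
    (ε : ℝ) (hε : 0 < ε) (hε1 : ε ≤ 1)
    (hν : ∀ A : Set X, MeasurableSet A → ENNReal.ofReal ε * γ A ≤ ν A)
    (f : X → ℝ) (hf : Measurable f) (hb : ∀ x, |f x| ≤ 1) :
    ∃ r : ℝ, |r| ≤ 1 - ε ∧ ∫ x, f x ∂ν = r + ε * ∫ x, f x ∂γ := by
  have hle : ENNReal.ofReal ε • γ ≤ ν := by
    rw [Measure.le_iff]; intro s hs; simpa using hν s hs
  haveI : IsFiniteMeasure (ENNReal.ofReal ε • γ) :=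
    ⟨by simp [ENNReal.mul_lt_top, ENNReal.ofReal_lt_top]⟩
  set μ := ν - ENNReal.ofReal ε • γ with hμ
  have hdec : μ + ENNReal.ofReal ε • γ = ν := Measure.sub_add_cancel_of_le hle
  have hint : ∀ (m : Measure X) [IsFiniteMeasure m], Integrable f m := fun m _ =>
    (integrable_const (1:ℝ)).mono' hf.aestronglyMeasurable
      (Filter.Eventually.of_forall fun x => by simpa using hb x)
  have hμuniv : μ Set.univ = 1 - ENNReal.ofReal ε := by
    rw [hμ, Measure.sub_apply MeasurableSet.univ hle]
    simp
  have heq : ∫ x, f x ∂ν = (∫ x, f x ∂μ) + ε * ∫ x, f x ∂γ := by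
    rw [← hdec, integral_add_measure (hint μ) (hint _), integral_smul_measure,
      ENNReal.toReal_ofReal hε.le, smul_eq_mul]
  refine ⟨∫ x, f x ∂μ, ?_, heq⟩
  calc |∫ x, f x ∂μ| = ‖∫ x, f x ∂μ‖ := (Real.norm_eq_abs _).symm
    _ ≤ 1 * (μ Set.univ).toReal :=
        norm_integral_le_of_norm_le_const (Filter.Eventually.of_forall fun x => by rw [Real.norm_eq_abs]; exact hb x)
    _ = 1 - ε := by
        rw [hμuniv, one_mul, ENNReal.toReal_sub_of_le (by simpa using ENNReal.ofReal_le_one.mpr hε1) ENNReal.one_ne_top]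
        simp [ENNReal.toReal_ofReal hε.le]

/-- Dobrushin-type minorization comparison lemma: if `ν ≥ ε γ` and `ν' ≥ ε γ'`
setwise, then `‖ν − ν'‖ ≤ 2(1−ε) + ε‖γ − γ'‖`; in particular `‖ν − ν'‖ ≤ 2(1−ε)`
when `γ = γ'`.  Total variation is expressed through test functions `|f| ≤ 1`. -/
theorem minorization_comparison {X : Type*} [MeasurableSpace X]
    (ν ν' γ γ' : Measure X)
    [IsProbabilityMeasure ν] [IsProbabilityMeasure ν']
    [IsProbabilityMeasure γ] [IsProbabilityMeasure γ']
    (ε : ℝ) (hε : 0 < ε)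
    (hν : ∀ A : Set X, MeasurableSet A → ENNReal.ofReal ε * γ A ≤ ν A)
    (hν' : ∀ A : Set X, MeasurableSet A → ENNReal.ofReal ε * γ' A ≤ ν' A) :
    (∀ t : ℝ,
      (∀ f : X → ℝ, Measurable f → (∀ x, |f x| ≤ 1) →
        |(∫ x, f x ∂γ) - ∫ x, f x ∂γ'| ≤ t) →
      ∀ f : X → ℝ, Measurable f → (∀ x, |f x| ≤ 1) →
        |(∫ x, f x ∂ν) - ∫ x, f x ∂ν'| ≤ 2 * (1 - ε) + ε * t) ∧
    (γ = γ' →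
      ∀ f : X → ℝ, Measurable f → (∀ x, |f x| ≤ 1) →
        |(∫ x, f x ∂ν) - ∫ x, f x ∂ν'| ≤ 2 * (1 - ε)) := by
  have hε1 : ε ≤ 1 := by
    by_contra h
    push_neg at h
    have := hν Set.univ MeasurableSet.univ
    simp only [measure_univ, mul_one] at this
    exact absurd (ENNReal.ofReal_le_one.mp this) (not_le.mpr h)
  have main : ∀ t : ℝ,
      (∀ f : X → ℝ, Measurable f → (∀ x, |f x| ≤ 1) →
        |(∫ x, f x ∂γ) - ∫ x, f x ∂γ'| ≤ t) →
      ∀ f : X → ℝ, Measurable f → (∀ x, |f x| ≤ 1) →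
        |(∫ x, f x ∂ν) - ∫ x, f x ∂ν'| ≤ 2 * (1 - ε) + ε * t := by
    intro t ht f hf hb
    obtain ⟨r, hr, heq⟩ := aux_decomp ν γ ε hε hε1 hν f hf hb
    obtain ⟨r', hr', heq'⟩ := aux_decomp ν' γ' ε hε hε1 hν' f hf hb
    have : (∫ x, f x ∂ν) - ∫ x, f x ∂ν' = (r - r') + ε * ((∫ x, f x ∂γ) - ∫ x, f x ∂γ') := by
      rw [heq, heq']; ring
    rw [this]
    calc |(r - r') + ε * ((∫ x, f x ∂γ) - ∫ x, f x ∂γ')|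
        ≤ |r - r'| + |ε * ((∫ x, f x ∂γ) - ∫ x, f x ∂γ')| := abs_add_le _ _
      _ ≤ (|r| + |r'|) + ε * t := by
          gcongr
          · exact abs_sub _ _
          · rw [abs_mul, abs_of_pos hε]
            exact mul_le_mul_of_nonneg_left (ht f hf hb) hε.le
      _ ≤ 2 * (1 - ε) + ε * t := by linarith
  refine ⟨main, fun hγ f hf hb => ?_⟩
  have := main 0 (fun g hg hgb => by rw [hγ]; simp) f hf hb
  linarith
end

section
/- Let μ, ν be probability measures on a measurable space and let Λ be a bounded, strictly positive measurable function with 0 < inf Λ ≤ sup Λ < ∞. Define the reweighted measures μ_Λ(A) = ∫_A Λ dμ / ∫ Λ dμ and ν_Λ(A) = ∫_A Λ dν / ∫ Λ dν. Then ‖μ_Λ − ν_Λ‖ ≤ 2 (sup Λ / inf Λ) ‖μ − ν‖, where ‖·‖ denotes the total variation distance ‖ρ − ρ'‖ = sup_{|f|≤1} |ρ(f) − ρ'(f)|. -/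
open MeasureTheory

/-- Reweighting lemma: if `c ≤ Λ ≤ C` with `c > 0`, the normalized reweighted
measures satisfy `‖μ_Λ − ν_Λ‖ ≤ 2 (C/c) ‖μ − ν‖` in total variation. -/
theorem reweighting_tv_bound {X : Type*} [MeasurableSpace X]
    (μ ν : Measure X) [IsProbabilityMeasure μ] [IsProbabilityMeasure ν]
    (Λ : X → ℝ) (hΛ : Measurable Λ) (c C : ℝ) (hc : 0 < c)
    (hbound : ∀ x, c ≤ Λ x ∧ Λ x ≤ C)
    (t : ℝ)
    (ht : ∀ f : X → ℝ, Measurable f → (∀ x, |f x| ≤ 1) →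
      |(∫ x, f x ∂μ) - ∫ x, f x ∂ν| ≤ t) :
    ∀ f : X → ℝ, Measurable f → (∀ x, |f x| ≤ 1) →
      |(∫ x, f x * Λ x ∂μ) / (∫ x, Λ x ∂μ) -
        (∫ x, f x * Λ x ∂ν) / (∫ x, Λ x ∂ν)| ≤ 2 * (C / c) * t := by
  intro f hf hf1
  -- basic positivity facts
  have ht0 : 0 ≤ t := by
    have := ht (fun _ => 0) measurable_const (by intro x; simp)
    simpa using this
  -- integrability lemmas
  have habsΛ : ∀ x, |Λ x| ≤ C := by
    intro x
    rw [abs_of_pos (lt_of_lt_of_le hc (hbound x).1)]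
    exact (hbound x).2
  have hintΛ : ∀ (ρ : Measure X) [IsProbabilityMeasure ρ], Integrable Λ ρ := by
    intro ρ _
    refine ⟨hΛ.aestronglyMeasurable, HasFiniteIntegral.of_bounded (C := C) ?_⟩
    exact ae_of_all _ fun x => by simpa [Real.norm_eq_abs] using habsΛ x
  have habsfΛ : ∀ x, |f x * Λ x| ≤ C := by
    intro x
    rw [abs_mul]
    calc |f x| * |Λ x| ≤ 1 * |Λ x| :=
          mul_le_mul_of_nonneg_right (hf1 x) (abs_nonneg _)
      _ = |Λ x| := one_mul _
      _ ≤ C := habsΛ x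
  have hintfΛ : ∀ (ρ : Measure X) [IsProbabilityMeasure ρ],
      Integrable (fun x => f x * Λ x) ρ := by
    intro ρ _
    refine ⟨(hf.mul hΛ).aestronglyMeasurable, HasFiniteIntegral.of_bounded (C := C) ?_⟩
    exact ae_of_all _ fun x => by simpa [Real.norm_eq_abs, abs_mul] using habsfΛ x
  -- notation
  set A : ℝ := ∫ x, f x * Λ x ∂μ with hA
  set B : ℝ := ∫ x, f x * Λ x ∂ν with hB
  set Zμ : ℝ := ∫ x, Λ x ∂μ with hZμ
  set Zν : ℝ := ∫ x, Λ x ∂ν with hZν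
  -- lower bounds on the normalizers
  have hZlow : ∀ (ρ : Measure X) [IsProbabilityMeasure ρ], c ≤ ∫ x, Λ x ∂ρ := by
    intro ρ _
    have : ∫ (_ : X), c ∂ρ ≤ ∫ x, Λ x ∂ρ :=
      integral_mono (integrable_const c) (hintΛ ρ) fun x => (hbound x).1
    simpa using this
  have hZμc : c ≤ Zμ := hZlow μ
  have hZνc : c ≤ Zν := hZlow ν
  have hZμ0 : 0 < Zμ := lt_of_lt_of_le hc hZμc
  have hZν0 : 0 < Zν := lt_of_lt_of_le hc hZνc
  have hC0 : 0 < C := lt_of_lt_of_le hc (le_trans (hbound (Classical.choice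
    (by
      by_contra h
      have : (μ Set.univ) = 0 := by
        have : Set.univ (α := X) = ∅ := by
          ext x; exact absurd ⟨x⟩ h
        simp [this]
      simp [measure_univ] at this))).1 (hbound _).2)
  -- |A - B| ≤ C * t and |Zμ - Zν| ≤ C * t
  have hAB : |A - B| ≤ C * t := by
    have hg : ∀ x, |f x * Λ x * C⁻¹| ≤ 1 := by
      intro x
      rw [abs_mul, abs_inv, abs_of_pos hC0, ← div_eq_mul_inv]
      exact (div_le_one hC0).mpr (habsfΛ x)
    have := ht (fun x => f x * Λ x * C⁻¹) ((hf.mul hΛ).mul measurable_const) hg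
    rw [integral_mul_const, integral_mul_const, ← sub_mul, abs_mul, abs_inv,
      abs_of_pos hC0] at this
    calc |A - B| = |A - B| * C⁻¹ * C := by field_simp
      _ ≤ t * C := mul_le_mul_of_nonneg_right this (le_of_lt hC0)
      _ = C * t := mul_comm _ _
  have hZZ : |Zν - Zμ| ≤ C * t := by
    have hg : ∀ x, |Λ x * C⁻¹| ≤ 1 := by
      intro x
      rw [abs_mul, abs_inv, abs_of_pos hC0, ← div_eq_mul_inv]
      exact (div_le_one hC0).mpr (habsΛ x)
    have := ht (fun x => Λ x * C⁻¹) (hΛ.mul measurable_const) hg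
    rw [integral_mul_const, integral_mul_const, ← sub_mul, abs_mul, abs_inv,
      abs_of_pos hC0] at this
    rw [abs_sub_comm]
    calc |Zμ - Zν| = |Zμ - Zν| * C⁻¹ * C := by field_simp
      _ ≤ t * C := mul_le_mul_of_nonneg_right this (le_of_lt hC0)
      _ = C * t := mul_comm _ _
  -- |B| ≤ Zν
  have hBle : |B| ≤ Zν := by
    have h1 : |B| ≤ ∫ x, |f x * Λ x| ∂ν := by
      simpa only [Real.norm_eq_abs] using
        norm_integral_le_integral_norm (μ := ν) (fun x => f x * Λ x)
    refine le_trans h1 (integral_mono ((hintfΛ ν).abs) (hintΛ ν) fun x => ?_)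
    calc |f x * Λ x| = |f x| * |Λ x| := abs_mul _ _
      _ ≤ 1 * |Λ x| := mul_le_mul_of_nonneg_right (hf1 x) (abs_nonneg _)
      _ = |Λ x| := one_mul _
      _ = Λ x := abs_of_pos (lt_of_lt_of_le hc (hbound x).1)
  have hBZν : |B / Zν| ≤ 1 := by
    rw [abs_div, abs_of_pos hZν0]
    exact (div_le_one hZν0).mpr hBle
  -- main computation
  have key : A / Zμ - B / Zν = ((A - B) + (B / Zν) * (Zν - Zμ)) / Zμ := by
    field_simp
    ring
  calc |A / Zμ - B / Zν| = |(A - B) + (B / Zν) * (Zν - Zμ)| / Zμ := by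
        rw [key, abs_div, abs_of_pos hZμ0]
    _ ≤ (|A - B| + |B / Zν| * |Zν - Zμ|) / Zμ := by
        gcongr
        exact le_of_le_of_eq (abs_add_le _ _) (by rw [abs_mul])
    _ ≤ (C * t + 1 * (C * t)) / c := by
        apply div_le_div₀ (by positivity) _ hc hZμc
        have h2 : |B / Zν| * |Zν - Zμ| ≤ 1 * (C * t) :=
          mul_le_mul hBZν hZZ (abs_nonneg _) one_pos.le
        linarith
    _ = 2 * (C / c) * t := by field_simp; ring
end

section
/- Under the same hypotheses (finite set I, pseudometric m, nonnegative matrix C with max_i Σ_j e^{m(i,j)} C_{ij} ≤ c < 1, D = Σ_{n≥0} C^n), for every subset J ⊆ I and every i ∈ I one has Σ_{j∈J} D_{ij} ≤ e^{−m(i,J)} / (1−c), where m(i,J) := min_{j∈J} m(i,j). -/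
/-- Exponential-decay matrix lemma, localized form: under
`max_i Σ_j e^{m(i,j)} C_{ij} ≤ c < 1`, the matrix `D = Σ_n C^n` satisfies
`Σ_{j∈J} D_{ij} ≤ e^{−m(i,J)}/(1−c)` for every nonempty `J ⊆ I`, where
`m(i,J) = min_{j∈J} m(i,j)`. -/
theorem matrix_exp_decay_subset {I : Type*} [Fintype I] [DecidableEq I]
    (m : I → I → ℝ)
    (hm0 : ∀ i, m i i = 0) (hmsymm : ∀ i j, m i j = m j i)
    (hmtri : ∀ i j k, m i k ≤ m i j + m j k) (hmnonneg : ∀ i j, 0 ≤ m i j)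
    (C : Matrix I I ℝ) (hC : ∀ i j, 0 ≤ C i j)
    (c : ℝ) (hc : c < 1)
    (hCm : ∀ i, ∑ j, Real.exp (m i j) * C i j ≤ c) :
    ∀ (J : Finset I) (hJ : J.Nonempty) (i : I),
      ∑ j ∈ J, (∑' n : ℕ, (C ^ n) i j) ≤
        Real.exp (-(J.inf' hJ fun j => m i j)) / (1 - c) := by
  intro J hJ i0
  have hc0 : 0 ≤ c :=
    le_trans (Finset.sum_nonneg fun j _ => mul_nonneg (Real.exp_pos _).le (hC i0 j)) (hCm i0)
  -- nonnegativity of powers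
  have hCn : ∀ n i j, 0 ≤ (C ^ n) i j := by
    intro n
    induction n with
    | zero =>
      intro i j
      rw [pow_zero, Matrix.one_apply]
      split <;> norm_num
    | succ n ih =>
      intro i j
      rw [pow_succ, Matrix.mul_apply]
      exact Finset.sum_nonneg fun k _ => mul_nonneg (ih i k) (hC k j)
  -- key estimate
  have key : ∀ n i, ∑ j, Real.exp (m i j) * (C ^ n) i j ≤ c ^ n := by
    intro n
    induction n with
    | zero =>
      intro i
      simp [Matrix.one_apply, hm0]
    | succ n ih =>
      intro i
      calc ∑ j, Real.exp (m i j) * (C ^ (n + 1)) i j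
          ≤ ∑ j, ∑ k, (Real.exp (m i k) * C i k) * (Real.exp (m k j) * (C ^ n) k j) := by
            apply Finset.sum_le_sum
            intro j _
            rw [pow_succ', Matrix.mul_apply, Finset.mul_sum]
            apply Finset.sum_le_sum
            intro k _
            have h1 : Real.exp (m i j) ≤ Real.exp (m i k + m k j) :=
              Real.exp_le_exp.2 (hmtri i k j)
            calc Real.exp (m i j) * (C i k * (C ^ n) k j)
                ≤ Real.exp (m i k + m k j) * (C i k * (C ^ n) k j) :=
                  mul_le_mul_of_nonneg_right h1 (mul_nonneg (hC i k) (hCn n k j))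
              _ = (Real.exp (m i k) * C i k) * (Real.exp (m k j) * (C ^ n) k j) := by
                  rw [Real.exp_add]; ring
        _ = ∑ k, (Real.exp (m i k) * C i k) * ∑ j, Real.exp (m k j) * (C ^ n) k j := by
            rw [Finset.sum_comm]
            simp [Finset.mul_sum]
        _ ≤ ∑ k, (Real.exp (m i k) * C i k) * c ^ n := by
            apply Finset.sum_le_sum
            intro k _
            exact mul_le_mul_of_nonneg_left (ih k)
              (mul_nonneg (Real.exp_pos _).le (hC i k))
        _ ≤ c * c ^ n := by
            rw [← Finset.sum_mul]
            exact mul_le_mul_of_nonneg_right (hCm i) (pow_nonneg hc0 n)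
        _ = c ^ (n + 1) := by ring
  have hgeo : Summable (fun n : ℕ => c ^ n) := summable_geometric_of_lt_one hc0 hc
  -- entrywise bound and summability
  have hbound : ∀ n (j : I), Real.exp (m i0 j) * (C ^ n) i0 j ≤ c ^ n := fun n j =>
    le_trans (Finset.single_le_sum
      (fun k _ => mul_nonneg (Real.exp_pos _).le (hCn n i0 k)) (Finset.mem_univ j)) (key n i0)
  have hsumE : ∀ j : I, Summable (fun n : ℕ => Real.exp (m i0 j) * (C ^ n) i0 j) := fun j =>
    hgeo.of_nonneg_of_le (fun n => mul_nonneg (Real.exp_pos _).le (hCn n i0 j))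
      (fun n => hbound n j)
  have hsum : ∀ j : I, Summable (fun n : ℕ => (C ^ n) i0 j) := by
    intro j
    have := (hsumE j).mul_left (Real.exp (m i0 j))⁻¹
    simpa [mul_assoc, Real.exp_ne_zero, inv_mul_cancel_left₀] using this
  set d : ℝ := J.inf' hJ fun j => m i0 j with hd
  calc ∑ j ∈ J, ∑' n : ℕ, (C ^ n) i0 j
      ≤ ∑ j ∈ J, Real.exp (-d) * ∑' n : ℕ, Real.exp (m i0 j) * (C ^ n) i0 j := by
        apply Finset.sum_le_sum
        intro j hjJ
        rw [← tsum_mul_left]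
        apply Summable.tsum_le_tsum _ (hsum j) ((hsumE j).mul_left _)
        intro n
        have hdm : d ≤ m i0 j := Finset.inf'_le _ hjJ
        have h1 : (1 : ℝ) ≤ Real.exp (-d) * Real.exp (m i0 j) := by
          rw [← Real.exp_add]
          nlinarith [Real.add_one_le_exp (-d + m i0 j)]
        calc (C ^ n) i0 j = 1 * (C ^ n) i0 j := (one_mul _).symm
          _ ≤ (Real.exp (-d) * Real.exp (m i0 j)) * (C ^ n) i0 j :=
              mul_le_mul_of_nonneg_right h1 (hCn n i0 j)
          _ = Real.exp (-d) * (Real.exp (m i0 j) * (C ^ n) i0 j) := by ring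
    _ = Real.exp (-d) * ∑ j ∈ J, ∑' n : ℕ, Real.exp (m i0 j) * (C ^ n) i0 j := by
        rw [Finset.mul_sum]
    _ ≤ Real.exp (-d) * ∑ j, ∑' n : ℕ, Real.exp (m i0 j) * (C ^ n) i0 j := by
        apply mul_le_mul_of_nonneg_left _ (Real.exp_pos _).le
        apply Finset.sum_le_sum_of_subset_of_nonneg (Finset.subset_univ J)
        intro j _ _
        exact tsum_nonneg fun n => mul_nonneg (Real.exp_pos _).le (hCn n i0 j)
    _ = Real.exp (-d) * ∑' n : ℕ, ∑ j, Real.exp (m i0 j) * (C ^ n) i0 j := by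
        rw [Summable.tsum_finsetSum fun j _ => hsumE j]
    _ ≤ Real.exp (-d) * ∑' n : ℕ, c ^ n := by
        apply mul_le_mul_of_nonneg_left _ (Real.exp_pos _).le
        apply Summable.tsum_le_tsum _ _ hgeo
        · exact fun n => key n i0
        · exact (summable_sum fun j _ => hsumE j)
    _ = Real.exp (-d) / (1 - c) := by
        rw [tsum_geometric_of_lt_one hc0 hc, div_eq_mul_inv]
end

section
/- Let μ be a probability measure on a measurable space S, let X_1, …, X_N be i.i.d. random variables with law μ, and let μ̂ = (1/N) Σ_{k=1}^N δ_{X_k} be the empirical measure. Then for every d ≥ 1 and every measurable function f : S^d → ℝ with |f| ≤ 1, one has E[|μ^{⊗d}(f) − μ̂^{⊗d}(f)|²]^{1/2} ≤ 4d/√N. -/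
open MeasureTheory ProbabilityTheory

section Helpers

variable {S : Type*} [MeasurableSpace S]

/-- Bounded measurable functions are integrable on finite measures. -/
lemma my_integrable_of_bdd {α : Type*} [MeasurableSpace α] (ρ : Measure α)
    [IsFiniteMeasure ρ] {u : α → ℝ} (hu : Measurable u) (C : ℝ) (h : ∀ a, |u a| ≤ C) :
    Integrable u ρ := by
  refine ⟨hu.aestronglyMeasurable, ?_⟩
  refine HasFiniteIntegral.of_bounded (C := C) ?_
  filter_upwards with a
  simpa [Real.norm_eq_abs] using h a

/-- Joint law of an independent family is the product measure. -/
lemma my_joint_law {Ω : Type*} [MeasurableSpace Ω] (P : Measure Ω) [IsProbabilityMeasure P]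
    (μ : Measure S) [IsProbabilityMeasure μ] {N : ℕ}
    (X : Fin N → Ω → S) (hmeas : ∀ k, Measurable (X k))
    (hindep : iIndepFun X P)
    (hlaw : ∀ k, P.map (X k) = μ) :
    P.map (fun ω j => X j ω) = Measure.pi (fun _ : Fin N => μ) := by
  have hY : Measurable (fun ω (j : Fin N) => X j ω) :=
    measurable_pi_lambda _ fun j => hmeas j
  refine (Measure.pi_eq fun t ht => ?_).symm
  rw [Measure.map_apply hY (MeasurableSet.univ_pi ht)]
  have hpre : (fun ω (j : Fin N) => X j ω) ⁻¹' Set.pi Set.univ t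
      = ⋂ j ∈ Finset.univ, X j ⁻¹' t j := by
    ext ω; simp [Set.mem_pi]
  rw [hpre, hindep.measure_inter_preimage_eq_mul _ (fun j _ => ht j)]
  refine Finset.prod_congr rfl fun j _ => ?_
  rw [← hlaw j, Measure.map_apply (hmeas j) (ht j)]

/-- Pushforward of a product measure under an injective reindexing. -/
lemma my_pi_map_comp (μ : Measure S) [IsProbabilityMeasure μ] {N : ℕ}
    {ι : Type*} [Fintype ι] {m : ι → Fin N} (hm : Function.Injective m) :
    (Measure.pi fun _ : Fin N => μ).map (fun x => x ∘ m)
      = Measure.pi (fun _ : ι => μ) := by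
  classical
  have hg : Measurable (fun x : Fin N → S => x ∘ m) :=
    measurable_pi_lambda _ fun i => measurable_pi_apply (m i)
  refine (Measure.pi_eq fun t ht => ?_).symm
  rw [Measure.map_apply hg (MeasurableSet.univ_pi ht)]
  set T : Fin N → Set S := Function.extend m t (fun _ => Set.univ) with hT
  have hpre : (fun x : Fin N → S => x ∘ m) ⁻¹' Set.pi Set.univ t
      = Set.pi Set.univ T := by
    ext x
    simp only [Set.mem_preimage, Set.mem_pi, Set.mem_univ, true_implies, Function.comp]
    constructor
    · intro h j
      by_cases hj : ∃ i, m i = j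
      · obtain ⟨i, rfl⟩ := hj
        rw [hT, hm.extend_apply]
        exact h i
      · rw [hT, Function.extend_apply' _ _ _ hj]
        trivial
    · intro h i
      have := h (m i)
      rwa [hT, hm.extend_apply] at this
  rw [hpre, Measure.pi_pi]
  calc ∏ j : Fin N, μ (T j)
      = ∏ j ∈ Finset.image m Finset.univ, μ (T j) := by
        refine (Finset.prod_subset (Finset.subset_univ _) fun j _ hj => ?_).symm
        have hj' : ¬∃ i, m i = j := by
          simpa [Finset.mem_image] using hj
        rw [hT, Function.extend_apply' _ _ _ hj']
        simp
    _ = ∏ i : ι, μ (T (m i)) :=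
        Finset.prod_image (fun i _ i' _ h => hm h)
    _ = ∏ i : ι, μ (t i) := by
        refine Finset.prod_congr rfl fun i _ => ?_
        rw [hT, hm.extend_apply]

/-- Integral of a function of injectively-selected coordinates. -/
lemma my_integral_comp (μ : Measure S) [IsProbabilityMeasure μ] {N d : ℕ}
    {k : Fin d → Fin N} (hk : Function.Injective k)
    {g : (Fin d → S) → ℝ} (hg : Measurable g) :
    ∫ x, g (x ∘ k) ∂(Measure.pi fun _ : Fin N => μ)
      = ∫ y, g y ∂(Measure.pi fun _ : Fin d => μ) := by
  have hc : Measurable (fun x : Fin N → S => x ∘ k) :=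
    measurable_pi_lambda _ fun i => measurable_pi_apply (k i)
  rw [← my_pi_map_comp μ hk, integral_map hc.aemeasurable hg.aestronglyMeasurable]

/-- Cross term for disjoint injective selections factorizes. -/
lemma my_cross (μ : Measure S) [IsProbabilityMeasure μ] {N d : ℕ}
    {k l : Fin d → Fin N} (hm : Function.Injective (Sum.elim k l))
    {g h : (Fin d → S) → ℝ} (hg : Measurable g) (hh : Measurable h) :
    ∫ x, g (x ∘ k) * h (x ∘ l) ∂(Measure.pi fun _ : Fin N => μ)
      = (∫ y, g y ∂(Measure.pi fun _ : Fin d => μ))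
        * ∫ y, h y ∂(Measure.pi fun _ : Fin d => μ) := by
  have hG : Measurable (fun y : (Fin d ⊕ Fin d) → S =>
      g (y ∘ Sum.inl) * h (y ∘ Sum.inr)) := by
    refine Measurable.mul ?_ ?_
    · exact hg.comp (measurable_pi_lambda _ fun i => measurable_pi_apply _)
    · exact hh.comp (measurable_pi_lambda _ fun i => measurable_pi_apply _)
  have h1 : ∫ x, g (x ∘ k) * h (x ∘ l) ∂(Measure.pi fun _ : Fin N => μ)
      = ∫ y, g (y ∘ Sum.inl) * h (y ∘ Sum.inr)
          ∂(Measure.pi fun _ : Fin d ⊕ Fin d => μ) := by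
    have hc : Measurable (fun x : Fin N → S => x ∘ Sum.elim k l) :=
      measurable_pi_lambda _ fun i => measurable_pi_apply _
    rw [← my_pi_map_comp μ hm, integral_map hc.aemeasurable hG.aestronglyMeasurable]
    rfl
  rw [h1]
  have h2 := (measurePreserving_sumPiEquivProdPi
      (fun _ : Fin d ⊕ Fin d => μ)).integral_comp
      (MeasurableEquiv.sumPiEquivProdPi (fun _ : Fin d ⊕ Fin d => S)).measurableEmbedding
      (fun z : ((Fin d → S) × (Fin d → S)) => g z.1 * h z.2)
  calc ∫ y, g (y ∘ Sum.inl) * h (y ∘ Sum.inr) ∂(Measure.pi fun _ : Fin d ⊕ Fin d => μ)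
      = ∫ z, g z.1 * h z.2
          ∂((Measure.pi fun _ : Fin d => μ).prod (Measure.pi fun _ : Fin d => μ)) := h2
    _ = _ := integral_prod_mul g h

end Helpers


lemma my_count {d N : ℕ} : ∀ [_inst : DecidablePred fun p : (Fin d → Fin N) × (Fin d → Fin N) =>
      ¬ Function.Injective (Sum.elim p.1 p.2)],
    (Finset.univ.filter fun p : (Fin d → Fin N) × (Fin d → Fin N) =>
      ¬ Function.Injective (Sum.elim p.1 p.2)).card ≤ 4 * d ^ 2 * N ^ (2 * d - 1) := by
  classical
  intro _inst
  set D := Fin d ⊕ Fin d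
  -- map pairs into functions on the sum type
  have h1 : (Finset.univ.filter fun p : (Fin d → Fin N) × (Fin d → Fin N) =>
        ¬ Function.Injective (Sum.elim p.1 p.2)).card
      ≤ (Finset.univ.filter fun m : D → Fin N => ¬ Function.Injective m).card := by
    refine Finset.card_le_card_of_injOn (fun p => Sum.elim p.1 p.2) ?_ ?_
    · intro p hp
      simp only [Finset.coe_filter, Set.mem_setOf_eq, Finset.mem_filter, Finset.mem_univ, true_and] at hp ⊢
      exact hp
    · intro p _ q _ hpq
      have h1 : p.1 = q.1 := funext fun i => congrFun hpq (Sum.inl i)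
      have h2 : p.2 = q.2 := funext fun i => congrFun hpq (Sum.inr i)
      exact Prod.ext h1 h2
  -- noninjective functions are covered by equality constraints
  have h2 : (Finset.univ.filter fun m : D → Fin N => ¬ Function.Injective m)
      ⊆ (Finset.univ : Finset D).offDiag.biUnion
          (fun q => Finset.univ.filter fun m : D → Fin N => m q.1 = m q.2) := by
    intro m hm
    simp only [Finset.mem_filter, Finset.mem_univ, true_and] at hm
    obtain ⟨a, b, hab, hne⟩ := Function.not_injective_iff.1 hm
    refine Finset.mem_biUnion.2 ⟨(a, b), ?_, ?_⟩
    · exact Finset.mem_offDiag.2 ⟨Finset.mem_univ _, Finset.mem_univ _, hne⟩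
    · simp [hab]
  -- each constraint set has at most N^(2d-1) elements
  have h3 : ∀ q : D × D, q ∈ (Finset.univ : Finset D).offDiag →
      (Finset.univ.filter fun m : D → Fin N => m q.1 = m q.2).card ≤ N ^ (2 * d - 1) := by
    intro q hq
    have hne : q.1 ≠ q.2 := (Finset.mem_offDiag.1 hq).2.2
    have hcard : Fintype.card {x : D // x ≠ q.2} = 2 * d - 1 := by
      have : Fintype.card {x : D // x ≠ q.2}
          = Fintype.card D - 1 := by
        rw [Fintype.card_subtype_compl (p := fun x : D => x = q.2),
          Fintype.card_subtype_eq q.2]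
      rw [this]
      simp only [D, Fintype.card_sum, Fintype.card_fin]
      omega
    have := Finset.card_le_card_of_injOn
      (f := fun (m : D → Fin N) (x : {x : D // x ≠ q.2}) => m x.1)
      (s := Finset.univ.filter fun m : D → Fin N => m q.1 = m q.2)
      (t := Finset.univ)
      (fun m _ => Finset.mem_univ _) ?_
    · calc (Finset.univ.filter fun m : D → Fin N => m q.1 = m q.2).card
          ≤ (Finset.univ : Finset ({x : D // x ≠ q.2} → Fin N)).card := this
        _ = N ^ (2 * d - 1) := by
            rw [Finset.card_univ, Fintype.card_fun, Fintype.card_fin, hcard]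
    · intro m hm m' hm' hmm
      simp only [Finset.coe_filter, Set.mem_setOf_eq, Finset.mem_univ, true_and] at hm hm'
      funext x
      by_cases hx : x = q.2
      · subst hx
        have h1 : m q.1 = m' q.1 := congrFun hmm ⟨q.1, hne⟩
        rw [← hm, ← hm', h1]
      · exact congrFun hmm ⟨x, hx⟩
  calc (Finset.univ.filter fun p : (Fin d → Fin N) × (Fin d → Fin N) =>
        ¬ Function.Injective (Sum.elim p.1 p.2)).card
      ≤ (Finset.univ.filter fun m : D → Fin N => ¬ Function.Injective m).card := h1
    _ ≤ ((Finset.univ : Finset D).offDiag.biUnion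
          (fun q => Finset.univ.filter fun m : D → Fin N => m q.1 = m q.2)).card :=
        Finset.card_le_card h2
    _ ≤ ∑ q ∈ (Finset.univ : Finset D).offDiag,
          (Finset.univ.filter fun m : D → Fin N => m q.1 = m q.2).card :=
        Finset.card_biUnion_le
    _ ≤ ∑ _q ∈ (Finset.univ : Finset D).offDiag, N ^ (2 * d - 1) :=
        Finset.sum_le_sum h3
    _ ≤ 4 * d ^ 2 * N ^ (2 * d - 1) := by
        rw [Finset.sum_const, smul_eq_mul]
        have : (Finset.univ : Finset D).offDiag.card ≤ 4 * d ^ 2 := by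
          rw [Finset.offDiag_card]
          simp only [Finset.card_univ, D, Fintype.card_sum, Fintype.card_fin]
          calc (d + d) * (d + d) - (d + d) ≤ (d + d) * (d + d) := Nat.sub_le _ _
            _ = 4 * d ^ 2 := by ring
        exact Nat.mul_le_mul_right _ this

open MeasureTheory ProbabilityTheory

section Main

/-- L² bound for products of empirical measures: if `X_1,…,X_N` are i.i.d. with
law `μ` and `μ̂` is the empirical measure, then for every measurable `|f| ≤ 1` on
`S^d`, `E[|μ^{⊗d}(f) − μ̂^{⊗d}(f)|²]^{1/2} ≤ 4d/√N`. -/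
theorem empirical_product_L2_bound {S : Type*} [MeasurableSpace S]
    {Ω : Type*} [MeasurableSpace Ω] (P : Measure Ω) [IsProbabilityMeasure P]
    (μ : Measure S) [IsProbabilityMeasure μ]
    (N : ℕ) (hN : 0 < N)
    (X : Fin N → Ω → S) (hmeas : ∀ k, Measurable (X k))
    (hindep : iIndepFun X P)
    (hlaw : ∀ k, P.map (X k) = μ)
    (d : ℕ) (hd : 1 ≤ d)
    (f : (Fin d → S) → ℝ) (hf : Measurable f) (hfb : ∀ x, |f x| ≤ 1) :
    Real.sqrt (∫ ω,
        |(∫ x, f x ∂(Measure.pi fun _ : Fin d => μ)) -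
          (N : ℝ)⁻¹ ^ d * ∑ k : Fin d → Fin N, f (fun i => X (k i) ω)| ^ 2 ∂P)
      ≤ 4 * d / Real.sqrt N := by
  classical
  set π : Measure (Fin d → S) := Measure.pi fun _ : Fin d => μ with hπ
  set ν : Measure (Fin N → S) := Measure.pi fun _ : Fin N => μ with hν
  set c : ℝ := ∫ x, f x ∂π with hc
  set g : (Fin d → S) → ℝ := fun y => f y - c with hg
  have hgm : Measurable g := hf.sub measurable_const
  have hcb : |c| ≤ 1 := by
    have h := norm_integral_le_of_norm_le_const (μ := π) (f := f) (C := 1)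
      (Filter.Eventually.of_forall fun x => by simpa [Real.norm_eq_abs] using hfb x)
    simpa [Real.norm_eq_abs] using h
  have hgb : ∀ y, |g y| ≤ 2 := by
    intro y
    have h1 := abs_le.1 (hfb y)
    have h2 := abs_le.1 hcb
    rw [hg, abs_le]
    constructor <;> simp only <;> linarith
  have hfint : Integrable f π := my_integrable_of_bdd π hf 1 hfb
  have hπg0 : ∫ y, g y ∂π = 0 := by
    rw [hg]
    rw [integral_sub hfint (integrable_const c), integral_const]
    simp [hc]
  have hsel : ∀ k : Fin d → Fin N, Measurable fun x : Fin N → S => x ∘ k :=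
    fun k => measurable_pi_lambda _ fun i => measurable_pi_apply _
  -- the integrand as a function on the product space
  set F : (Fin N → S) → ℝ :=
    fun x => |c - (N : ℝ)⁻¹ ^ d * ∑ k : Fin d → Fin N, f (x ∘ k)| ^ 2 with hF
  have hFm : Measurable F := by
    refine Measurable.pow_const (Measurable.abs ?_) 2
    refine Measurable.sub measurable_const (Measurable.const_mul ?_ _)
    exact Finset.measurable_sum _ fun k _ => hf.comp (hsel k)
  -- change of variables to the product space
  have hYm : Measurable (fun ω (j : Fin N) => X j ω) :=
    measurable_pi_lambda _ fun j => hmeas j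
  have step1 : ∫ ω, |c - (N : ℝ)⁻¹ ^ d *
        ∑ k : Fin d → Fin N, f (fun i => X (k i) ω)| ^ 2 ∂P = ∫ x, F x ∂ν := by
    rw [hν, ← my_joint_law P μ X hmeas hindep hlaw,
      integral_map hYm.aemeasurable hFm.aestronglyMeasurable]
    rfl
  -- pointwise identity: recenter f
  have hNd : (N : ℝ)⁻¹ ^ d * (N : ℝ) ^ d = 1 := by
    rw [← mul_pow, inv_mul_cancel₀ (by exact_mod_cast hN.ne'), one_pow]
  have hFeq : ∀ x, F x = ((N : ℝ)⁻¹ ^ d * ∑ k : Fin d → Fin N, g (x ∘ k)) ^ 2 := by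
    intro x
    have hcard : (Finset.univ : Finset (Fin d → Fin N)).card = N ^ d := by
      rw [Finset.card_univ, Fintype.card_fun, Fintype.card_fin, Fintype.card_fin]
    have hsum : ∑ k : Fin d → Fin N, g (x ∘ k)
        = (∑ k : Fin d → Fin N, f (x ∘ k)) - (N : ℝ) ^ d * c := by
      rw [hg]
      rw [Finset.sum_sub_distrib, Finset.sum_const, hcard, nsmul_eq_mul]
      push_cast
      ring
    simp only [hF]
    rw [hsum, sq_abs]
    have heq : (N : ℝ)⁻¹ ^ d * ((∑ k : Fin d → Fin N, f (x ∘ k)) - (N : ℝ) ^ d * c)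
        = -(c - (N : ℝ)⁻¹ ^ d * ∑ k : Fin d → Fin N, f (x ∘ k)) := by
      rw [mul_sub]
      rw [show (N : ℝ)⁻¹ ^ d * ((N : ℝ) ^ d * c) = ((N : ℝ)⁻¹ ^ d * (N : ℝ) ^ d) * c
        from (mul_assoc _ _ _).symm, hNd, one_mul]
      ring
    rw [heq, neg_sq]
  -- the individual cross terms
  set t : (Fin d → Fin N) × (Fin d → Fin N) → ℝ :=
    fun p => ∫ x, g (x ∘ p.1) * g (x ∘ p.2) ∂ν with ht
  have hint : ∀ p : (Fin d → Fin N) × (Fin d → Fin N),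
      Integrable (fun x => g (x ∘ p.1) * g (x ∘ p.2)) ν := by
    intro p
    refine my_integrable_of_bdd ν ((hgm.comp (hsel p.1)).mul (hgm.comp (hsel p.2))) 4 ?_
    intro x
    rw [abs_mul]
    calc |g (x ∘ p.1)| * |g (x ∘ p.2)| ≤ 2 * 2 :=
          mul_le_mul (hgb _) (hgb _) (abs_nonneg _) (by norm_num)
      _ = 4 := by norm_num
  -- expansion of the square of the sum
  have step2 : ∫ x, F x ∂ν
      = ((N : ℝ)⁻¹ ^ d) ^ 2 * ∑ p : (Fin d → Fin N) × (Fin d → Fin N), t p := by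
    have h1 : ∀ x, F x = ((N : ℝ)⁻¹ ^ d) ^ 2 *
        ∑ k : Fin d → Fin N, ∑ l : Fin d → Fin N, g (x ∘ k) * g (x ∘ l) := by
      intro x
      rw [hFeq x, mul_pow]
      congr 1
      rw [pow_two, Finset.sum_mul_sum]
    simp_rw [h1]
    rw [integral_const_mul]
    congr 1
    calc ∫ x, ∑ k : Fin d → Fin N, ∑ l : Fin d → Fin N, g (x ∘ k) * g (x ∘ l) ∂ν
        = ∑ k : Fin d → Fin N, ∫ x, ∑ l : Fin d → Fin N, g (x ∘ k) * g (x ∘ l) ∂ν :=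
          integral_finset_sum _ fun k _ => integrable_finset_sum _ fun l _ => hint (k, l)
      _ = ∑ k : Fin d → Fin N, ∑ l : Fin d → Fin N, ∫ x, g (x ∘ k) * g (x ∘ l) ∂ν :=
          Finset.sum_congr rfl fun k _ => integral_finset_sum _ fun l _ => hint (k, l)
      _ = ∑ p : (Fin d → Fin N) × (Fin d → Fin N), t p := by
          rw [← Finset.univ_product_univ, Finset.sum_product]
  -- each term is at most 4 in absolute value
  have habs : ∀ p : (Fin d → Fin N) × (Fin d → Fin N), |t p| ≤ 4 := by
    intro p
    have h := norm_integral_le_of_norm_le_const (μ := ν)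
      (f := fun x => g (x ∘ p.1) * g (x ∘ p.2)) (C := 4)
      (Filter.Eventually.of_forall fun x => by
        rw [Real.norm_eq_abs, abs_mul]
        calc |g (x ∘ p.1)| * |g (x ∘ p.2)| ≤ 2 * 2 :=
              mul_le_mul (hgb _) (hgb _) (abs_nonneg _) (by norm_num)
          _ = 4 := by norm_num)
    simpa [Real.norm_eq_abs] using h
  -- terms with injective combined index vanish
  have hzero : ∀ p : (Fin d → Fin N) × (Fin d → Fin N),
      Function.Injective (Sum.elim p.1 p.2) → t p = 0 := by
    intro p hp
    rw [ht]
    simp only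
    rw [hν, my_cross μ hp hgm hgm, ← hπ, hπg0, mul_zero]
  -- bound the sum by counting bad pairs
  set B : Finset ((Fin d → Fin N) × (Fin d → Fin N)) :=
    Finset.univ.filter fun p => ¬ Function.Injective (Sum.elim p.1 p.2) with hB
  have hsumbound : ∑ p : (Fin d → Fin N) × (Fin d → Fin N), t p
      ≤ 16 * (d : ℝ) ^ 2 * (N : ℝ) ^ (2 * d - 1) := by
    calc ∑ p : (Fin d → Fin N) × (Fin d → Fin N), t p
        ≤ ∑ p : (Fin d → Fin N) × (Fin d → Fin N), |t p| :=
          Finset.sum_le_sum fun p _ => le_abs_self _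
      _ = (∑ p ∈ B, |t p|) +
            ∑ p ∈ Finset.univ.filter
              (fun p => ¬¬ Function.Injective (Sum.elim p.1 p.2)), |t p| := by
          rw [hB, Finset.sum_filter_add_sum_filter_not]
      _ = ∑ p ∈ B, |t p| := by
          rw [add_eq_left]
          refine Finset.sum_eq_zero fun p hp => ?_
          rw [Finset.mem_filter] at hp
          rw [hzero p (not_not.1 hp.2), abs_zero]
      _ ≤ B.card • (4 : ℝ) := Finset.sum_le_card_nsmul _ _ _ fun p _ => habs p
      _ ≤ (4 * d ^ 2 * N ^ (2 * d - 1)) • (4 : ℝ) := by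
          refine nsmul_le_nsmul_left (by norm_num) ?_
          exact my_count
      _ = 16 * (d : ℝ) ^ 2 * (N : ℝ) ^ (2 * d - 1) := by
          rw [nsmul_eq_mul]
          push_cast
          ring
  -- arithmetic: collect powers of N
  have hNpos : (0 : ℝ) < N := by exact_mod_cast hN
  have harith : ((N : ℝ)⁻¹ ^ d) ^ 2 * (16 * (d : ℝ) ^ 2 * (N : ℝ) ^ (2 * d - 1))
      = 16 * d ^ 2 / N := by
    have h2d : 2 * d = (2 * d - 1) + 1 := by omega
    rw [← pow_mul, inv_pow, show d * 2 = 2 * d by ring, h2d, pow_succ, Nat.add_sub_cancel]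
    field_simp
  have key : ∫ ω, |c - (N : ℝ)⁻¹ ^ d *
        ∑ k : Fin d → Fin N, f (fun i => X (k i) ω)| ^ 2 ∂P ≤ 16 * d ^ 2 / N := by
    rw [step1, step2, ← harith]
    refine mul_le_mul_of_nonneg_left hsumbound (by positivity)
  calc Real.sqrt (∫ ω, |c - (N : ℝ)⁻¹ ^ d *
        ∑ k : Fin d → Fin N, f (fun i => X (k i) ω)| ^ 2 ∂P)
      ≤ Real.sqrt (16 * d ^ 2 / N) := Real.sqrt_le_sqrt key
    _ = 4 * d / Real.sqrt N := by
        rw [show (16 : ℝ) * d ^ 2 / N = (4 * d / Real.sqrt N) ^ 2 by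
          rw [div_pow, Real.sq_sqrt hNpos.le]; ring]
        exact Real.sqrt_sq (by positivity)

end Main
end

section
/- In the setting of the previous statement (μ a probability measure, μ̂ the empirical measure of N i.i.d. samples, d ≥ 1, |f| ≤ 1, N ≥ d²), the variance bound Var[μ̂^{⊗d}(f)] ≤ 4(1 − (1 − d/N)^d) ≤ 4d²/N holds. -/
open MeasureTheory ProbabilityTheory

/-- Variance bound for the product empirical measure:
`Var[μ̂^{⊗d}(f)] ≤ 4(1 − (1 − d/N)^d) ≤ 4d²/N` for `|f| ≤ 1` and `N ≥ d²`. -/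
theorem empirical_product_variance_bound {S : Type*} [MeasurableSpace S]
    {Ω : Type*} [MeasurableSpace Ω] (P : Measure Ω) [IsProbabilityMeasure P]
    (μ : Measure S) [IsProbabilityMeasure μ]
    (N : ℕ) (hN : 0 < N)
    (X : Fin N → Ω → S) (hmeas : ∀ k, Measurable (X k))
    (hindep : iIndepFun X P)
    (hlaw : ∀ k, P.map (X k) = μ)
    (d : ℕ) (hd : 1 ≤ d) (hNd : d ^ 2 ≤ N)
    (f : (Fin d → S) → ℝ) (hf : Measurable f) (hfb : ∀ x, |f x| ≤ 1) :
    variance (fun ω => (N : ℝ)⁻¹ ^ d * ∑ k : Fin d → Fin N, f (fun i => X (k i) ω)) P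
        ≤ 4 * (1 - (1 - (d : ℝ) / N) ^ d) ∧
      4 * (1 - (1 - (d : ℝ) / N) ^ d) ≤ 4 * d ^ 2 / N := by
  classical
  have hdN : d ≤ N := le_trans (by nlinarith) hNd
  have hNR : (0 : ℝ) < N := by exact_mod_cast hN
  -- basic objects
  set c : ℝ := (N : ℝ)⁻¹ ^ d with hc
  set g : (Fin d → Fin N) → Ω → ℝ := fun k ω => f (fun i => X (k i) ω) with hgdef
  have hgmeas : ∀ k, Measurable (g k) := fun k =>
    hf.comp (measurable_pi_lambda _ fun i => hmeas (k i))
  have hgb : ∀ k ω, |g k ω| ≤ 1 := fun k ω => hfb _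
  have hgint : ∀ k, Integrable (g k) P := fun k =>
    (integrable_const (1 : ℝ)).mono' (hgmeas k).aestronglyMeasurable
      (ae_of_all _ fun ω => by simpa using hgb k ω)
  set m : (Fin d → Fin N) → ℝ := fun k => ∫ ω, g k ω ∂P with hmdef
  have hmb : ∀ k, |m k| ≤ 1 := by
    intro k
    have h1 : |m k| ≤ ∫ ω, |g k ω| ∂P := by
      simpa [Real.norm_eq_abs] using norm_integral_le_integral_norm (μ := P) (g k)
    have h2 : ∫ ω, |g k ω| ∂P ≤ ∫ _ω, (1 : ℝ) ∂P :=
      integral_mono (hgint k).abs (integrable_const _) fun ω => hgb k ω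
    simpa using h1.trans h2
  set F : (Fin d → Fin N) → Ω → ℝ := fun k ω => g k ω - m k with hFdef
  have hFmeas : ∀ k, Measurable (F k) := fun k => (hgmeas k).sub measurable_const
  have hFb : ∀ k ω, |F k ω| ≤ 2 := fun k ω => by
    have := hgb k ω; have := hmb k
    simp only [F]
    calc |g k ω - m k| ≤ |g k ω| + |m k| := abs_sub _ _
      _ ≤ 2 := by linarith
  have hFint : ∀ k, Integrable (F k) P := fun k => (hgint k).sub (integrable_const _)
  have hFzero : ∀ k, ∫ ω, F k ω ∂P = 0 := by
    intro k
    simp only [F]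
    rw [integral_sub (hgint k) (integrable_const _), integral_const]
    simp [m]
  have hFFint : ∀ k k', Integrable (fun ω => F k ω * F k' ω) P := by
    intro k k'
    refine (integrable_const (4 : ℝ)).mono' ((hFmeas k).mul (hFmeas k')).aestronglyMeasurable
      (ae_of_all _ fun ω => ?_)
    rw [Real.norm_eq_abs, abs_mul]
    calc |F k ω| * |F k' ω| ≤ 2 * 2 :=
          mul_le_mul (hFb k ω) (hFb k' ω) (abs_nonneg _) (by norm_num)
      _ = 4 := by norm_num
  -- covariance vanishing for disjoint index tuples
  have hcov0 : ∀ k k' : Fin d → Fin N, (∀ i j, k i ≠ k' j) →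
      ∫ ω, F k ω * F k' ω ∂P = 0 := by
    intro k k' hdisj
    set A : Finset (Fin N) := Finset.image k Finset.univ with hA
    set B : Finset (Fin N) := Finset.image k' Finset.univ with hB
    have hAB : Disjoint A B := by
      rw [Finset.disjoint_left]
      rintro a ha hb
      simp only [A, B, Finset.mem_image, Finset.mem_univ, true_and] at ha hb
      obtain ⟨i, rfl⟩ := ha; obtain ⟨j, hj⟩ := hb
      exact hdisj i j hj.symm
    have H := hindep.indepFun_finset A B hAB hmeas
    set φA : ({x // x ∈ A} → S) → ℝ := fun v => f (fun i => v ⟨k i, by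
      simp [A]⟩) - m k with hφA
    set φB : ({x // x ∈ B} → S) → ℝ := fun v => f (fun j => v ⟨k' j, by
      simp [B]⟩) - m k' with hφB
    have hφAm : Measurable φA :=
      (hf.comp (measurable_pi_lambda _ fun i => measurable_pi_apply _)).sub measurable_const
    have hφBm : Measurable φB :=
      (hf.comp (measurable_pi_lambda _ fun i => measurable_pi_apply _)).sub measurable_const
    have hind : IndepFun (F k) (F k') P := by
      have : F k = φA ∘ (fun a (i : A) => X i a) := by
        funext ω; simp [φA, F, g]
      have h2 : F k' = φB ∘ (fun a (j : B) => X j a) := by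
        funext ω; simp [φB, F, g]
      rw [this, h2]
      exact H.comp hφAm hφBm
    have h := hind.integral_mul_eq_mul_integral (hFint k).1 (hFint k').1
    rw [show (∫ ω, F k ω * F k' ω ∂P) = integral P (F k * F k') from rfl, h,
      show integral P (F k) = 0 from hFzero k]
    ring
  -- bound on each covariance
  have hcov4 : ∀ k k' : Fin d → Fin N, ∫ ω, F k ω * F k' ω ∂P ≤ 4 := by
    intro k k'
    calc ∫ ω, F k ω * F k' ω ∂P ≤ ∫ _ω, (4 : ℝ) ∂P := by
          refine integral_mono (hFFint k k') (integrable_const _) fun ω => ?_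
          calc F k ω * F k' ω ≤ |F k ω * F k' ω| := le_abs_self _
            _ = |F k ω| * |F k' ω| := abs_mul _ _
            _ ≤ 2 * 2 := mul_le_mul (hFb k ω) (hFb k' ω) (abs_nonneg _) (by norm_num)
            _ = 4 := by norm_num
      _ = 4 := by simp
  -- the "bad" set of non-disjoint tuples and its cardinality
  set Bad : (Fin d → Fin N) → Finset (Fin d → Fin N) :=
    fun k => (Fintype.piFinset fun _ : Fin d => (Finset.image k Finset.univ)ᶜ)ᶜ with hBad
  have hBadMem : ∀ k k', k' ∉ Bad k → ∀ i j, k i ≠ k' j := by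
    intro k k' hk' i j
    simp only [Bad, Finset.mem_compl, not_not, Fintype.mem_piFinset, Finset.mem_compl,
      Finset.mem_image, Finset.mem_univ, true_and] at hk'
    intro h
    exact hk' j ⟨i, h⟩
  have hBadCard : ∀ k, (Bad k).card ≤ N ^ d - (N - d) ^ d := by
    intro k
    have h1 : (Bad k).card = N ^ d - (Fintype.piFinset fun _ : Fin d =>
        (Finset.image k Finset.univ)ᶜ).card := by
      rw [hBad]
      rw [Finset.card_compl]
      congr 1
      simp [Fintype.card_fun]
    rw [h1]
    apply Nat.sub_le_sub_left
    rw [Fintype.card_piFinset]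
    have : ∀ i : Fin d, N - d ≤ ((Finset.image k Finset.univ)ᶜ : Finset (Fin N)).card := by
      intro i
      rw [Finset.card_compl, Fintype.card_fin]
      apply Nat.sub_le_sub_left
      calc (Finset.image k Finset.univ).card ≤ (Finset.univ : Finset (Fin d)).card :=
            Finset.card_image_le
        _ = d := by simp
    calc (N - d) ^ d = ∏ _i : Fin d, (N - d) := by simp
      _ ≤ ∏ i : Fin d, ((Finset.image k Finset.univ)ᶜ : Finset (Fin N)).card :=
          Finset.prod_le_prod (fun _ _ => Nat.zero_le _) (fun i _ => this i)
  -- the random variable and its variance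
  set Y : Ω → ℝ := fun ω => c * ∑ k : Fin d → Fin N, g k ω with hY
  have hYmeas : Measurable Y :=
    (measurable_const.mul (Finset.measurable_sum _ fun k _ => hgmeas k))
  have hYb : ∀ ω, |Y ω| ≤ c * N ^ d := by
    intro ω
    have hc0 : 0 ≤ c := by positivity
    simp only [Y, abs_mul, abs_of_nonneg hc0]
    refine mul_le_mul_of_nonneg_left ?_ hc0
    calc |∑ k : Fin d → Fin N, g k ω| ≤ ∑ k : Fin d → Fin N, |g k ω| :=
          Finset.abs_sum_le_sum_abs _ _
      _ ≤ ∑ _k : Fin d → Fin N, (1 : ℝ) := Finset.sum_le_sum fun k _ => hgb k ω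
      _ = N ^ d := by simp [Fintype.card_fun]
  have hYL2 : MemLp Y 2 P := by
    refine (memLp_top_of_bound hYmeas.aestronglyMeasurable (c * N ^ d)
      (ae_of_all _ fun ω => by simpa using hYb ω)).mono_exponent le_top
  have hEY : ∫ ω, Y ω ∂P = c * ∑ k : Fin d → Fin N, m k := by
    simp only [Y]
    rw [integral_const_mul, integral_finset_sum _ fun k _ => hgint k]
  have hvar : variance Y P =
      c ^ 2 * ∑ k : Fin d → Fin N, ∑ k' : Fin d → Fin N, ∫ ω, F k ω * F k' ω ∂P := by
    rw [variance_eq_integral hYL2.aemeasurable, show (fun ω => (Y ω - ∫ ω, Y ω ∂P) ^ 2)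
      = ((Y - fun _ => ∫ ω, Y ω ∂P : Ω → ℝ) ^ (2 : ℕ)) from rfl]
    have hrw : ((Y - fun _ => ∫ ω, Y ω ∂P : Ω → ℝ) ^ (2 : ℕ)) =
        fun ω => c ^ 2 * ∑ k : Fin d → Fin N, ∑ k' : Fin d → Fin N, F k ω * F k' ω := by
      funext ω
      have : Y ω - ∫ ω, Y ω ∂P = c * ∑ k : Fin d → Fin N, F k ω := by
        rw [hEY]
        simp only [Y, F]
        rw [Finset.sum_sub_distrib]
        ring
      have hsq : (∑ k : Fin d → Fin N, F k ω) ^ 2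
          = ∑ k : Fin d → Fin N, ∑ k' : Fin d → Fin N, F k ω * F k' ω := by
        rw [sq, Finset.sum_mul_sum]
      simp only [Pi.pow_apply, Pi.sub_apply]
      rw [this, mul_pow, hsq]
    rw [hrw]
    rw [integral_const_mul]
    congr 1
    rw [integral_finset_sum _ fun k _ => integrable_finset_sum _ fun k' _ => hFFint k k']
    exact Finset.sum_congr rfl fun k _ =>
      integral_finset_sum _ fun k' _ => hFFint k k'
  -- bound the double sum
  have hsum : ∑ k : Fin d → Fin N, ∑ k' : Fin d → Fin N, ∫ ω, F k ω * F k' ω ∂P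
      ≤ (N : ℝ) ^ d * (4 * ((N : ℝ) ^ d - ((N - d : ℕ) : ℝ) ^ d)) := by
    have hinner : ∀ k, ∑ k' : Fin d → Fin N, ∫ ω, F k ω * F k' ω ∂P
        ≤ 4 * ((N : ℝ) ^ d - ((N - d : ℕ) : ℝ) ^ d) := by
      intro k
      have heq : ∑ k' : Fin d → Fin N, ∫ ω, F k ω * F k' ω ∂P
          = ∑ k' ∈ Bad k, ∫ ω, F k ω * F k' ω ∂P := by
        symm
        apply Finset.sum_subset (Finset.subset_univ _)
        intro k' _ hk'
        exact hcov0 k k' (hBadMem k k' hk')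
      rw [heq]
      calc ∑ k' ∈ Bad k, ∫ ω, F k ω * F k' ω ∂P ≤ ∑ _k' ∈ Bad k, (4 : ℝ) :=
            Finset.sum_le_sum fun k' _ => hcov4 k k'
        _ = 4 * (Bad k).card := by rw [Finset.sum_const]; ring
        _ ≤ 4 * ((N : ℝ) ^ d - ((N - d : ℕ) : ℝ) ^ d) := by
            have h1 : ((Bad k).card : ℝ) ≤ ((N ^ d - (N - d) ^ d : ℕ) : ℝ) := by
              exact_mod_cast hBadCard k
            have h2 : ((N ^ d - (N - d) ^ d : ℕ) : ℝ) = (N : ℝ) ^ d - ((N - d : ℕ) : ℝ) ^ d := by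
              rw [Nat.cast_sub (Nat.pow_le_pow_left (Nat.sub_le _ _) _)]
              push_cast; ring
            nlinarith [h1, h2]
    calc ∑ k : Fin d → Fin N, ∑ k' : Fin d → Fin N, ∫ ω, F k ω * F k' ω ∂P
        ≤ ∑ _k : Fin d → Fin N, 4 * ((N : ℝ) ^ d - ((N - d : ℕ) : ℝ) ^ d) :=
          Finset.sum_le_sum fun k _ => hinner k
      _ = (N : ℝ) ^ d * (4 * ((N : ℝ) ^ d - ((N - d : ℕ) : ℝ) ^ d)) := by
          rw [Finset.sum_const, Finset.card_univ]
          simp only [Fintype.card_fun, Fintype.card_fin, nsmul_eq_mul]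
          push_cast
          ring
  constructor
  · -- main variance bound
    show variance Y P ≤ 4 * (1 - (1 - (d : ℝ) / N) ^ d)
    rw [hvar]
    have hc2 : (0 : ℝ) ≤ c ^ 2 := sq_nonneg _
    calc c ^ 2 * ∑ k : Fin d → Fin N, ∑ k' : Fin d → Fin N, ∫ ω, F k ω * F k' ω ∂P
        ≤ c ^ 2 * ((N : ℝ) ^ d * (4 * ((N : ℝ) ^ d - ((N - d : ℕ) : ℝ) ^ d))) :=
          mul_le_mul_of_nonneg_left hsum hc2
      _ = 4 * (1 - (1 - (d : ℝ) / N) ^ d) := by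
          have hcast : ((N - d : ℕ) : ℝ) = (N : ℝ) - d := by
            rw [Nat.cast_sub hdN]
          have h1d : (1 : ℝ) - (d : ℝ) / N = ((N : ℝ) - d) / N := by
            field_simp
          rw [hcast, h1d, div_pow, hc]
          have hNd0 : ((N : ℝ) ^ d) ≠ 0 := by positivity
          field_simp
          ring_nf
          have e1 : (N:ℝ)^(d*2) * (N:ℝ)⁻¹^(d*2) = 1 := by
            rw [← mul_pow, mul_inv_cancel₀ hNR.ne', one_pow]
          have e2 : (N:ℝ)^(d*3) * (N:ℝ)⁻¹^(d*2) = (N:ℝ)^d := by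
            rw [show d*3 = d + d*2 by ring, pow_add, mul_assoc, ← mul_pow,
              mul_inv_cancel₀ hNR.ne', one_pow, mul_one]
          rw [e1, e2]; ring
  · -- Bernoulli bound
    have hx1 : (d : ℝ) / N ≤ 1 := by
      rw [div_le_one hNR]
      exact_mod_cast hdN
    have hb := one_add_mul_le_pow (a := -((d : ℝ) / N)) (by linarith) d
    have : 1 - (d : ℝ) * ((d : ℝ) / N) ≤ (1 - (d : ℝ) / N) ^ d := by
      calc 1 - (d : ℝ) * ((d : ℝ) / N) = 1 + (d : ℝ) * -((d : ℝ) / N) := by ring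
        _ ≤ (1 + -((d : ℝ) / N)) ^ d := hb
        _ = (1 - (d : ℝ) / N) ^ d := by ring_nf
    have h2 : 4 * (1 - (1 - (d : ℝ) / N) ^ d) ≤ 4 * ((d : ℝ) * ((d : ℝ) / N)) := by
      linarith
    calc 4 * (1 - (1 - (d : ℝ) / N) ^ d) ≤ 4 * ((d : ℝ) * ((d : ℝ) / N)) := h2
      _ = 4 * (d : ℝ) ^ 2 / N := by ring
end

section
/- Let μ be a probability measure, μ̂ the empirical measure of N i.i.d. samples from μ, d ≥ 1 with N ≥ d², and f measurable with |f| ≤ 1. Then the bias of the product empirical measure satisfies |E[μ̂^{⊗d}(f)] − μ^{⊗d}(f)| ≤ 2(1 − N!/((N−d)! N^d)) ≤ 2(1 − (1 − d/N)^d) ≤ 2d²/N. -/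
open MeasureTheory ProbabilityTheory

/-- Bias bound for the product empirical measure:
`|E[μ̂^{⊗d}(f)] − μ^{⊗d}(f)| ≤ 2(1 − N!/((N−d)! N^d)) ≤ 2(1 − (1 − d/N)^d) ≤ 2d²/N`
for `|f| ≤ 1`, `d ≥ 1`, `N ≥ d²`. -/
theorem empirical_product_bias_bound {S : Type*} [MeasurableSpace S]
    {Ω : Type*} [MeasurableSpace Ω] (P : Measure Ω) [IsProbabilityMeasure P]
    (μ : Measure S) [IsProbabilityMeasure μ]
    (N : ℕ) (hN : 0 < N)
    (X : Fin N → Ω → S) (hmeas : ∀ k, Measurable (X k))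
    (hindep : iIndepFun X P)
    (hlaw : ∀ k, P.map (X k) = μ)
    (d : ℕ) (hd : 1 ≤ d) (hNd : d ^ 2 ≤ N)
    (f : (Fin d → S) → ℝ) (hf : Measurable f) (hfb : ∀ x, |f x| ≤ 1) :
    |(∫ ω, (N : ℝ)⁻¹ ^ d * ∑ k : Fin d → Fin N, f (fun i => X (k i) ω) ∂P) -
        ∫ x, f x ∂(Measure.pi fun _ : Fin d => μ)| ≤
        2 * (1 - (N.factorial : ℝ) / ((N - d).factorial * N ^ d)) ∧
      2 * (1 - (N.factorial : ℝ) / ((N - d).factorial * N ^ d)) ≤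
        2 * (1 - (1 - (d : ℝ) / N) ^ d) ∧
      2 * (1 - (1 - (d : ℝ) / N) ^ d) ≤ 2 * d ^ 2 / N := by
  classical
  have hdd : d ≤ d ^ 2 := by nlinarith
  have hdN : d ≤ N := hdd.trans hNd
  have hNpos : (0 : ℝ) < N := by exact_mod_cast hN
  set ν := Measure.pi fun _ : Fin d => μ with hν
  -- the ratio N!/((N-d)! N^d) equals descFactorial / N^d
  have hfact : (N.factorial : ℝ) / ((N - d).factorial * N ^ d)
      = (N.descFactorial d : ℝ) / N ^ d := by
    have h := Nat.factorial_mul_descFactorial hdN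
    have hfd : ((N - d).factorial : ℝ) ≠ 0 := by positivity
    have hNp : ((N : ℝ) ^ d) ≠ 0 := by positivity
    field_simp
    push_cast [← h]
    ring
  -- joint law of an injective subfamily is the product measure
  have hjoint : ∀ k : Fin d → Fin N, Function.Injective k →
      P.map (fun ω i => X (k i) ω) = ν := by
    intro k hk
    have hgm : Measurable (fun ω i => X (k i) ω) :=
      measurable_pi_lambda _ fun i => hmeas (k i)
    refine (Measure.pi_eq fun s hs => ?_).symm
    rw [Measure.map_apply hgm (MeasurableSet.univ_pi hs)]
    set sets : Fin N → Set S := fun j => ⋂ i ∈ {i : Fin d | k i = j}, s i with hsets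
    have hsetsm : ∀ j, MeasurableSet (sets j) :=
      fun j => MeasurableSet.biInter (Set.to_countable _) fun i _ => hs i
    have hsets_k : ∀ i, sets (k i) = s i := by
      intro i
      apply Set.Subset.antisymm
      · intro x hx
        simp only [hsets, Set.mem_iInter, Set.mem_setOf_eq] at hx
        exact hx i rfl
      · intro x hx
        simp only [hsets, Set.mem_iInter, Set.mem_setOf_eq]
        intro i' hi'
        rwa [hk hi']
    have hpre : (fun ω i => X (k i) ω) ⁻¹' Set.pi Set.univ s
        = ⋂ j ∈ Finset.image k Finset.univ, X j ⁻¹' sets j := by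
      ext ω
      simp only [Set.mem_preimage, Set.mem_pi, Set.mem_univ, forall_true_left,
        Set.mem_iInter, Finset.mem_image, Finset.mem_univ, true_and, hsets,
        Set.mem_setOf_eq]
      constructor
      · rintro h j ⟨i, rfl⟩ i' hi'
        exact hi' ▸ h i'
      · intro h i
        exact h (k i) ⟨i, rfl⟩ i rfl
    rw [hpre, hindep.measure_inter_preimage_eq_mul _ (fun j _ => hsetsm j),
      Finset.prod_image (fun i _ i' _ h => hk h)]
    refine Finset.prod_congr rfl fun i _ => ?_
    rw [hsets_k, ← hlaw (k i), Measure.map_apply (hmeas (k i)) (hs i)]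
  -- integrability and bounds
  have hgm : ∀ k : Fin d → Fin N, Measurable (fun ω => f fun i => X (k i) ω) :=
    fun k => hf.comp (measurable_pi_lambda _ fun i => hmeas (k i))
  have hint : ∀ k : Fin d → Fin N, Integrable (fun ω => f fun i => X (k i) ω) P := by
    intro k
    exact (integrable_const 1).mono' (hgm k).aestronglyMeasurable
      (Filter.Eventually.of_forall fun ω => by simpa using hfb _)
  have hIk_inj : ∀ k : Fin d → Fin N, Function.Injective k →
      (∫ ω, f (fun i => X (k i) ω) ∂P) = ∫ x, f x ∂ν := by
    intro k hk
    rw [← hjoint k hk, integral_map (measurable_pi_lambda _ fun i => hmeas (k i)).aemeasurable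
      hf.aestronglyMeasurable]
  have hIk_le : ∀ k : Fin d → Fin N, |∫ ω, f (fun i => X (k i) ω) ∂P| ≤ 1 := by
    intro k
    have := norm_integral_le_of_norm_le_const (C := 1) (μ := P)
      (f := fun ω => f (fun i => X (k i) ω))
      (Filter.Eventually.of_forall fun ω => by
        rw [Real.norm_eq_abs]; exact hfb _)
    simpa [Real.norm_eq_abs, measure_univ] using this
  have hI_le : |∫ x, f x ∂ν| ≤ 1 := by
    have := norm_integral_le_of_norm_le_const (C := 1) (μ := ν) (f := f)
      (Filter.Eventually.of_forall fun x => by rw [Real.norm_eq_abs]; exact hfb x)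
    simpa [Real.norm_eq_abs, measure_univ] using this
  -- count injective functions
  have hcard : (Finset.univ.filter (fun k : Fin d → Fin N => Function.Injective k)).card
      = N.descFactorial d := by
    rw [← Fintype.card_subtype,
      Fintype.card_congr (Equiv.subtypeInjectiveEquivEmbedding (Fin d) (Fin N))]
    simp [Fintype.card_embedding_eq]
  have hcard_compl :
      (Finset.univ.filter (fun k : Fin d → Fin N => ¬ Function.Injective k)).card
        = N ^ d - N.descFactorial d := by
    have h := Finset.card_filter_add_card_filter_not
      (s := (Finset.univ : Finset (Fin d → Fin N)))
      (p := fun k => Function.Injective k)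
    rw [hcard] at h
    have : (Finset.univ : Finset (Fin d → Fin N)).card = N ^ d := by
      simp [Finset.card_univ]
    omega
  have hDle : N.descFactorial d ≤ N ^ d := Nat.descFactorial_le_pow N d
  -- compute the integral
  set g : (Fin d → Fin N) → ℝ := fun k => ∫ ω, f (fun i => X (k i) ω) ∂P with hg
  have hint_eq : (∫ ω, (N : ℝ)⁻¹ ^ d * ∑ k : Fin d → Fin N, f (fun i => X (k i) ω) ∂P)
      = ((N : ℝ) ^ d)⁻¹ * ∑ k : Fin d → Fin N, g k := by
    rw [integral_const_mul, integral_finset_sum _ fun k _ => hint k, inv_pow]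
  set I := ∫ x, f x ∂ν with hI
  have hsum_split : ∑ k : Fin d → Fin N, g k
      = (N.descFactorial d : ℝ) * I
        + ∑ k ∈ Finset.univ.filter (fun k : Fin d → Fin N => ¬ Function.Injective k), g k := by
    rw [← Finset.sum_filter_add_sum_filter_not Finset.univ
      (fun k : Fin d → Fin N => Function.Injective k) g]
    congr 1
    rw [Finset.sum_congr rfl (fun k hk => hIk_inj k (Finset.mem_filter.mp hk).2),
      Finset.sum_const, hcard, nsmul_eq_mul]
  have hS_le : |∑ k ∈ Finset.univ.filter (fun k : Fin d → Fin N => ¬ Function.Injective k), g k|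
      ≤ ((N ^ d - N.descFactorial d : ℕ) : ℝ) := by
    calc |∑ k ∈ _, g k| ≤ ∑ k ∈ Finset.univ.filter
          (fun k : Fin d → Fin N => ¬ Function.Injective k), |g k| :=
        Finset.abs_sum_le_sum_abs _ _
      _ ≤ ∑ k ∈ Finset.univ.filter
          (fun k : Fin d → Fin N => ¬ Function.Injective k), 1 :=
        Finset.sum_le_sum fun k _ => hIk_le k
      _ = ((N ^ d - N.descFactorial d : ℕ) : ℝ) := by
        simp [hcard_compl]
  -- first inequality
  have hNdpos : (0 : ℝ) < (N : ℝ) ^ d := by positivity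
  have hDleR : (N.descFactorial d : ℝ) ≤ (N : ℝ) ^ d := by exact_mod_cast hDle
  have hcastsub : ((N ^ d - N.descFactorial d : ℕ) : ℝ)
      = (N : ℝ) ^ d - (N.descFactorial d : ℝ) := by
    push_cast [Nat.cast_sub hDle]
    ring
  refine ⟨?_, ?_, ?_⟩
  · rw [hint_eq, hsum_split, hfact]
    set D := (N.descFactorial d : ℝ) with hD
    set Sr := ∑ k ∈ Finset.univ.filter
      (fun k : Fin d → Fin N => ¬ Function.Injective k), g k with hSr
    rw [hcastsub] at hS_le
    have hD0 : 0 ≤ D := by positivity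
    have habs : |((N:ℝ) ^ d)⁻¹ * (D * I + Sr) - I|
        ≤ |(D / (N:ℝ)^d - 1) * I| + |((N:ℝ)^d)⁻¹ * Sr| := by
      have : ((N:ℝ) ^ d)⁻¹ * (D * I + Sr) - I
          = (D / (N:ℝ)^d - 1) * I + ((N:ℝ)^d)⁻¹ * Sr := by
        field_simp
        ring
      rw [this]
      exact abs_add_le _ _
    have h1 : |(D / (N:ℝ)^d - 1) * I| ≤ 1 - D / (N:ℝ)^d := by
      rw [abs_mul]
      have hle1 : D / (N:ℝ)^d ≤ 1 := by
        rw [div_le_one hNdpos]; exact hDleR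
      have : |D / (N:ℝ)^d - 1| = 1 - D / (N:ℝ)^d := by
        rw [abs_sub_comm, abs_of_nonneg (by linarith)]
      rw [this]
      calc (1 - D / (N:ℝ)^d) * |I| ≤ (1 - D / (N:ℝ)^d) * 1 :=
          mul_le_mul_of_nonneg_left hI_le (by linarith)
        _ = 1 - D / (N:ℝ)^d := by ring
    have h2 : |((N:ℝ)^d)⁻¹ * Sr| ≤ 1 - D / (N:ℝ)^d := by
      rw [abs_mul, abs_of_nonneg (by positivity : (0:ℝ) ≤ ((N:ℝ)^d)⁻¹)]
      calc ((N:ℝ)^d)⁻¹ * |Sr| ≤ ((N:ℝ)^d)⁻¹ * ((N:ℝ)^d - D) :=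
          mul_le_mul_of_nonneg_left hS_le (by positivity)
        _ = 1 - D / (N:ℝ)^d := by field_simp
    linarith
  · -- second inequality: (1 - d/N)^d ≤ descFactorial / N^d
    rw [hfact]
    have key : (1 - (d : ℝ) / N) ^ d ≤ (N.descFactorial d : ℝ) / (N : ℝ) ^ d := by
      have hprod : (N.descFactorial d : ℝ) / (N : ℝ) ^ d
          = ∏ i ∈ Finset.range d, ((N - i : ℕ) : ℝ) / N := by
        rw [Nat.descFactorial_eq_prod_range, Finset.prod_div_distrib]
        push_cast
        congr 1
        rw [Finset.prod_const, Finset.card_range]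
      have hpow : (1 - (d : ℝ) / N) ^ d
          = ∏ _i ∈ Finset.range d, (1 - (d : ℝ) / N) := by
        rw [Finset.prod_const, Finset.card_range]
      rw [hprod, hpow]
      refine Finset.prod_le_prod (fun i _ => ?_) (fun i hi => ?_)
      · have : (d : ℝ) / N ≤ 1 := by
          rw [div_le_one hNpos]; exact_mod_cast hdN
        linarith
      · have hiN : i < d := Finset.mem_range.mp hi
        have hsub : (N : ℝ) - d ≤ ((N - i : ℕ) : ℝ) := by
          rw [Nat.cast_sub (le_trans hiN.le hdN)]
          have : (i : ℝ) ≤ d := by exact_mod_cast hiN.le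
          linarith
        have heq : 1 - (d:ℝ)/N = ((N:ℝ) - d)/N := by field_simp
        rw [heq]
        exact (div_le_div_iff_of_pos_right hNpos).mpr hsub
    linarith
  · -- third inequality: Bernoulli
    have hx : (d : ℝ) / N ≤ 1 := by
      rw [div_le_one hNpos]
      exact_mod_cast hdN
    have hb := one_add_mul_le_pow (a := -((d:ℝ)/N)) (by linarith) d
    have : (1 + -((d:ℝ)/N)) ^ d = (1 - (d:ℝ)/N) ^ d := by ring_nf
    rw [this] at hb
    have hd2 : (d : ℝ) * ((d:ℝ)/N) = (d:ℝ)^2 / N := by ring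
    rw [div_le_iff₀ hNpos] at hx
    have : 2 * (1 - (1 - (d:ℝ)/N)^d) ≤ 2 * ((d:ℝ) * ((d:ℝ)/N)) := by
      nlinarith [hb]
    calc 2 * (1 - (1 - (d:ℝ)/N)^d) ≤ 2 * ((d:ℝ)^2/N) := by rw [← hd2]; exact this
      _ = 2 * (d:ℝ)^2 / N := by ring
end

section
/- Consider the filtering recursion π_n = F_n π_{n−1} with F_n = C_n ∘ P (correction then prediction) and the bootstrap particle filter π̂_n = Ĉ_n π̂_{n−1} with Ĉ_n = C_n ∘ S^N ∘ P, both started at π_0 = π̂_0 = μ. Assume the observation density satisfies κ ≤ g(x, y) ≤ κ^{−1} with 0 < κ < 1 (so each C_n is 2κ^{−2}-Lipschitz in ⫼·⫼), P is a ⫼·⫼-contraction, and ⫼ρ − S^N ρ⫼ ≤ 1/√N. Then for all n ≥ 1, ⫼π_n − π̂_n⫼ ≤ (Σ_{i=1}^n (2κ^{−2})^i) / √N. -/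
/-- Crude time-dependent error bound for the bootstrap particle filter: if the
correction maps are `2κ⁻²`-Lipschitz, the prediction map is a contraction, and
sampling has error `1/√N`, all for a pseudometric `D` on (random) measures, then
the filter `π_n = C_n P π_{n−1}` and particle filter `π̂_n = C_n S^N P π̂_{n−1}`
started from the same initial condition satisfy
`D(π_n, π̂_n) ≤ (Σ_{i=1}^n (2κ⁻²)^i)/√N`. -/
theorem bootstrap_particle_filter_crude_bound {M : Type*} (D : M → M → ℝ)
    (hself : ∀ x, D x x = 0) (hsymm : ∀ x y, D x y = D y x)
    (htri : ∀ x y z, D x z ≤ D x y + D y z)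
    (Cor : ℕ → M → M) (Pm Sm : M → M)
    (κ : ℝ) (hκ0 : 0 < κ) (hκ1 : κ < 1) (N : ℕ) (hN : 0 < N)
    (hCor : ∀ n x y, D (Cor n x) (Cor n y) ≤ 2 * (κ ^ 2)⁻¹ * D x y)
    (hP : ∀ x y, D (Pm x) (Pm y) ≤ D x y)
    (hS : ∀ x, D x (Sm x) ≤ 1 / Real.sqrt N)
    (μ : M) (pi pihat : ℕ → M)
    (hpi0 : pi 0 = μ) (hpihat0 : pihat 0 = μ)
    (hpi : ∀ n, pi (n + 1) = Cor (n + 1) (Pm (pi n)))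
    (hpihat : ∀ n, pihat (n + 1) = Cor (n + 1) (Sm (Pm (pihat n)))) :
    ∀ n, D (pi n) (pihat n) ≤
      (∑ i ∈ Finset.range n, (2 * (κ ^ 2)⁻¹) ^ (i + 1)) / Real.sqrt N := by
  have ha : (0:ℝ) < 2 * (κ ^ 2)⁻¹ := by positivity
  have hsqrt : (0:ℝ) < Real.sqrt N := Real.sqrt_pos.mpr (by exact_mod_cast hN)
  intro n
  induction n with
  | zero => simp [hpi0, hpihat0, hself]
  | succ n ih =>
    have step : D (pi (n+1)) (pihat (n+1)) ≤
        2 * (κ ^ 2)⁻¹ * (D (pi n) (pihat n) + 1 / Real.sqrt N) := by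
      rw [hpi, hpihat]
      calc D (Cor (n+1) (Pm (pi n))) (Cor (n+1) (Sm (Pm (pihat n))))
          ≤ 2 * (κ ^ 2)⁻¹ * D (Pm (pi n)) (Sm (Pm (pihat n))) := hCor _ _ _
        _ ≤ 2 * (κ ^ 2)⁻¹ * (D (pi n) (pihat n) + 1 / Real.sqrt N) := by
            apply mul_le_mul_of_nonneg_left _ ha.le
            calc D (Pm (pi n)) (Sm (Pm (pihat n)))
                ≤ D (Pm (pi n)) (Pm (pihat n)) + D (Pm (pihat n)) (Sm (Pm (pihat n))) :=
                  htri _ _ _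
              _ ≤ D (pi n) (pihat n) + 1 / Real.sqrt N :=
                  add_le_add (hP _ _) (hS _)
    refine step.trans ?_
    have hsum : (∑ i ∈ Finset.range (n+1), (2 * (κ ^ 2)⁻¹) ^ (i + 1)) =
        2 * (κ ^ 2)⁻¹ * ((∑ i ∈ Finset.range n, (2 * (κ ^ 2)⁻¹) ^ (i + 1)) + 1) := by
      rw [Finset.sum_range_succ', mul_add, mul_one, Finset.mul_sum]
      congr 1
      · exact Finset.sum_congr rfl fun i _ => by ring
      · ring
    rw [hsum, mul_div_assoc, add_div]
    apply mul_le_mul_of_nonneg_left _ ha.le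
    exact add_le_add ih le_rfl
end

section
/- Let μ = μ¹ ⊗ ⋯ ⊗ μ^d and ν = ν¹ ⊗ ⋯ ⊗ ν^d be product probability measures on S = S¹ × ⋯ × S^d, and let Λ : S → ℝ be bounded, strictly positive, and measurable. Define μ_Λ(A) = ∫_A Λ dμ / ∫ Λ dμ and ν_Λ analogously. Suppose there is ε > 0 such that for each i there is a measurable function Λ^i : S → ℝ not depending on the i-th coordinate (Λ^i(x) = Λ^i(x̃) whenever x and x̃ agree off coordinate i) with ε Λ^i(x) ≤ Λ(x) ≤ ε^{−1} Λ^i(x) for all x. Then ‖μ_Λ − ν_Λ‖ ≤ (2/ε²) Σ_{i=1}^d ‖μ^i − ν^i‖, where ‖·‖ denotes total variation distance (sup over |f| ≤ 1 of the difference of integrals). -/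
open MeasureTheory

private lemma bdd_integrable {α : Type*} [MeasurableSpace α] {ρ : Measure α} [IsFiniteMeasure ρ]
    {h : α → ℝ} (hm : Measurable h) {C : ℝ} (hb : ∀ x, |h x| ≤ C) : Integrable h ρ :=
  ⟨hm.aestronglyMeasurable, HasFiniteIntegral.of_bounded (C := C)
    (ae_of_all _ fun x => by simpa [Real.norm_eq_abs] using hb x)⟩

private lemma div_sub_div_abs_le {Am An Bm Bn D : ℝ} (hBm : 0 < Bm) (hBn : 0 < Bn)
    (hAn : |An| ≤ Bn) (h1 : |Am - An| ≤ D) (h2 : |Bm - Bn| ≤ D) :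
    |Am / Bm - An / Bn| ≤ 2 * D / Bm := by
  have key : Am / Bm - An / Bn = (Am - An) / Bm + An * (Bn - Bm) / (Bm * Bn) := by
    field_simp
    ring
  rw [key]
  have h3 : |An * (Bn - Bm) / (Bm * Bn)| ≤ D / Bm := by
    have hD : 0 ≤ D := le_trans (abs_nonneg _) h1
    calc |An * (Bn - Bm) / (Bm * Bn)| = |An| * |Bn - Bm| / (Bm * Bn) := by
          rw [abs_div, abs_mul, abs_of_pos (mul_pos hBm hBn)]
      _ ≤ Bn * D / (Bm * Bn) :=
          div_le_div₀ (by positivity)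
            (mul_le_mul hAn (by rwa [abs_sub_comm] at h2) (abs_nonneg _) hBn.le)
            (mul_pos hBm hBn) le_rfl
      _ = D / Bm := by
          rw [mul_comm Bn D, mul_div_mul_right _ _ hBn.ne']
  have h4 : |(Am - An) / Bm| ≤ D / Bm := by
    rw [abs_div, abs_of_pos hBm]
    exact (div_le_div_iff_of_pos_right hBm).mpr h1
  calc |(Am - An) / Bm + An * (Bn - Bm) / (Bm * Bn)|
      ≤ |(Am - An) / Bm| + |An * (Bn - Bm) / (Bm * Bn)| := abs_add_le _ _
    _ ≤ D / Bm + D / Bm := add_le_add h4 h3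
    _ = 2 * D / Bm := by ring

private lemma step_prod {X Y : Type*} [MeasurableSpace X] [MeasurableSpace Y]
    (m n : Measure X) (σ : Measure Y)
    [IsProbabilityMeasure m] [IsProbabilityMeasure n] [IsProbabilityMeasure σ]
    (G : X × Y → ℝ) (hGm : Measurable G) (hGpos : ∀ z, 0 < G z)
    (Cb : ℝ) (hGb : ∀ z, G z ≤ Cb)
    (ε : ℝ) (hε : 0 < ε)
    (L : Y → ℝ) (hLm : Measurable L)
    (hL : ∀ z : X × Y, ε * L z.2 ≤ G z ∧ G z ≤ ε⁻¹ * L z.2)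
    (t : ℝ)
    (ht : ∀ g : X → ℝ, Measurable g → (∀ x, |g x| ≤ 1) →
      |(∫ x, g x ∂m) - ∫ x, g x ∂n| ≤ t)
    (f : X × Y → ℝ) (hfm : Measurable f) (hfb : ∀ z, |f z| ≤ 1) :
    |(∫ z, f z * G z ∂(m.prod σ)) / (∫ z, G z ∂(m.prod σ)) -
      (∫ z, f z * G z ∂(n.prod σ)) / (∫ z, G z ∂(n.prod σ))| ≤ 2 / ε ^ 2 * t := by
  have hX : Nonempty X := by
    by_contra h
    rw [not_nonempty_iff] at h
    have h1 := measure_univ (μ := m)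
    rw [Set.univ_eq_empty_iff.mpr h, measure_empty] at h1
    simp at h1
  obtain ⟨x₀⟩ := hX
  have htnn : 0 ≤ t := by simpa using ht (fun _ => 0) measurable_const (by simp)
  have hεinv : 0 < ε⁻¹ := inv_pos.mpr hε
  have hLpos : ∀ y, 0 < L y := by
    intro y
    have h2 : 0 < ε⁻¹ * L y := lt_of_lt_of_le (hGpos (x₀, y)) (hL (x₀, y)).2
    have h3 := mul_pos hε h2
    rwa [← mul_assoc, mul_inv_cancel₀ hε.ne', one_mul] at h3
  have hLb : ∀ y, |L y| ≤ ε⁻¹ * Cb := by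
    intro y
    rw [abs_of_pos (hLpos y)]
    have h1 := (hL (x₀, y)).1
    have h2 := hGb (x₀, y)
    rw [inv_mul_eq_div, le_div_iff₀ hε]
    nlinarith
  have hGabs : ∀ z, |G z| ≤ Cb := fun z => by
    rw [abs_of_pos (hGpos z)]; exact hGb z
  have hfGm : Measurable fun z => f z * G z := hfm.mul hGm
  have hfGle : ∀ z, |f z * G z| ≤ G z := fun z => by
    rw [abs_mul]
    calc |f z| * |G z| ≤ 1 * |G z| := mul_le_mul_of_nonneg_right (hfb z) (abs_nonneg _)
      _ = |G z| := one_mul _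
      _ = G z := abs_of_pos (hGpos z)
  have hLint : Integrable L σ := bdd_integrable hLm hLb
  set IL := ∫ y, L y ∂σ with hILdef
  have hILpos : 0 < IL := by
    refine (integral_pos_iff_support_of_nonneg_ae
      (ae_of_all σ fun y => (hLpos y).le) hLint).2 ?_
    have hsupp : Function.support L = Set.univ := Set.eq_univ_of_forall fun y => (hLpos y).ne'
    rw [hsupp]
    simp
  have key : ∀ g : X × Y → ℝ, Measurable g → (∀ z, |g z| ≤ G z) →
      |(∫ z, g z ∂(m.prod σ)) - ∫ z, g z ∂(n.prod σ)| ≤ ε⁻¹ * t * IL := by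
    intro g hgm hgb
    have hgb' : ∀ z, |g z| ≤ Cb := fun z => (hgb z).trans (hGb z)
    have hgim : Integrable g (m.prod σ) := bdd_integrable hgm hgb'
    have hgin : Integrable g (n.prod σ) := bdd_integrable hgm hgb'
    rw [integral_prod_symm g hgim, integral_prod_symm g hgin,
      ← integral_sub hgim.integral_prod_right hgin.integral_prod_right]
    have hb : ∀ y, ‖(∫ x, g (x, y) ∂m) - ∫ x, g (x, y) ∂n‖ ≤ ε⁻¹ * t * L y := by
      intro y
      have hc : 0 < ε⁻¹ * L y := mul_pos hεinv (hLpos y)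
      have happ := ht (fun x => g (x, y) / (ε⁻¹ * L y))
        ((hgm.comp measurable_prodMk_right).div_const _)
        (fun x => by
          rw [abs_div, abs_of_pos hc, div_le_one hc]
          exact (hgb (x, y)).trans (hL (x, y)).2)
      rw [integral_div, integral_div, div_sub_div_same, abs_div, abs_of_pos hc,
        div_le_iff₀ hc] at happ
      rw [Real.norm_eq_abs]
      exact happ.trans (le_of_eq (by ring))
    calc |∫ y, ((∫ x, g (x, y) ∂m) - ∫ x, g (x, y) ∂n) ∂σ|
        ≤ ∫ y, ε⁻¹ * t * L y ∂σ :=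
          norm_integral_le_of_norm_le (hLint.const_mul _) (ae_of_all _ hb)
      _ = ε⁻¹ * t * IL := by rw [integral_const_mul]
  have hBbound : ∀ (ρ : Measure X), IsProbabilityMeasure ρ → ε * IL ≤ ∫ z, G z ∂(ρ.prod σ) := by
    intro ρ hρ
    have hGi : Integrable G (ρ.prod σ) := bdd_integrable hGm hGabs
    rw [integral_prod_symm G hGi]
    have step1 : ∀ y, ε * L y ≤ ∫ x, G (x, y) ∂ρ := by
      intro y
      have hconst : ∫ _ : X, ε * L y ∂ρ = ε * L y := by simp
      rw [← hconst]
      exact integral_mono (integrable_const _)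
        (bdd_integrable (hGm.comp measurable_prodMk_right)
          (fun x => hGabs (x, y))) (fun x => (hL (x, y)).1)
    calc ε * IL = ∫ y, ε * L y ∂σ := (integral_const_mul _ _).symm
      _ ≤ ∫ y, (∫ x, G (x, y) ∂ρ) ∂σ :=
          integral_mono (hLint.const_mul ε) hGi.integral_prod_right step1
  have hBm : 0 < ∫ z, G z ∂(m.prod σ) :=
    lt_of_lt_of_le (mul_pos hε hILpos) (hBbound m inferInstance)
  have hBn : 0 < ∫ z, G z ∂(n.prod σ) :=
    lt_of_lt_of_le (mul_pos hε hILpos) (hBbound n inferInstance)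
  have hAn : |∫ z, f z * G z ∂(n.prod σ)| ≤ ∫ z, G z ∂(n.prod σ) := by
    rw [← Real.norm_eq_abs]
    exact norm_integral_le_of_norm_le (bdd_integrable hGm hGabs)
      (ae_of_all _ fun z => by rw [Real.norm_eq_abs]; exact hfGle z)
  have h1 := key (fun z => f z * G z) hfGm hfGle
  have h2 := key G hGm (fun z => le_of_eq (abs_of_pos (hGpos z)))
  have hmain := div_sub_div_abs_le hBm hBn hAn h1 h2
  refine hmain.trans ?_
  calc 2 * (ε⁻¹ * t * IL) / (∫ z, G z ∂(m.prod σ))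
      ≤ 2 * (ε⁻¹ * t * IL) / (ε * IL) :=
        div_le_div_of_nonneg_left (by positivity) (mul_pos hε hILpos) (hBbound m inferInstance)
    _ = 2 / ε ^ 2 * t := by field_simp

private lemma pi_step {d : ℕ} (S : Fin d → Type*) [∀ i, MeasurableSpace (S i)]
    (a b : ∀ i, Measure (S i))
    [∀ i, IsProbabilityMeasure (a i)] [∀ i, IsProbabilityMeasure (b i)]
    (i₀ : Fin d) (hab : ∀ j, j ≠ i₀ → a j = b j)
    (Λ : (∀ i, S i) → ℝ) (hΛm : Measurable Λ) (hΛpos : ∀ x, 0 < Λ x)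
    (Cb : ℝ) (hΛb : ∀ x, Λ x ≤ Cb) (ε : ℝ) (hε : 0 < ε)
    (Λi : (∀ j, S j) → ℝ) (hΛim : Measurable Λi)
    (hind : ∀ x x' : ∀ j, S j, (∀ j, j ≠ i₀ → x j = x' j) → Λi x = Λi x')
    (hcomp : ∀ x, ε * Λi x ≤ Λ x ∧ Λ x ≤ ε⁻¹ * Λi x)
    (t : ℝ)
    (ht : ∀ g : S i₀ → ℝ, Measurable g → (∀ s, |g s| ≤ 1) →
      |(∫ s, g s ∂(a i₀)) - ∫ s, g s ∂(b i₀)| ≤ t)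
    (f : (∀ i, S i) → ℝ) (hfm : Measurable f) (hfb : ∀ x, |f x| ≤ 1) :
    |(∫ x, f x * Λ x ∂(Measure.pi a)) / (∫ x, Λ x ∂(Measure.pi a)) -
      (∫ x, f x * Λ x ∂(Measure.pi b)) / (∫ x, Λ x ∂(Measure.pi b))| ≤ 2 / ε ^ 2 * t := by
  classical
  let p : Fin d → Prop := fun j => j = i₀
  letI : Fintype (Subtype p) := Subtype.fintype p
  letI : Unique (Subtype p) := ⟨⟨⟨i₀, rfl⟩⟩, fun j => Subtype.ext j.2⟩
  let e := MeasurableEquiv.piEquivPiSubtypeProd S p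
  let m : Measure (∀ j : Subtype p, S j) := Measure.pi (fun j => a j)
  let n' : Measure (∀ j : Subtype p, S j) := Measure.pi (fun j => b j)
  let σ : Measure (∀ j : {j // ¬ p j}, S j) := Measure.pi (fun j => a j)
  have hσb : Measure.pi (fun j : {j // ¬ p j} => b j) = σ := by
    congr 1
    funext j
    exact (hab j j.2).symm
  have mpa : MeasurePreserving e (Measure.pi a) (m.prod σ) :=
    measurePreserving_piEquivPiSubtypeProd a p
  have mpb : MeasurePreserving e (Measure.pi b) (n'.prod σ) := by
    have h := measurePreserving_piEquivPiSubtypeProd b p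
    rwa [hσb] at h
  have transfer_a : ∀ h : (∀ j, S j) → ℝ,
      ∫ x, h x ∂(Measure.pi a) = ∫ z, h (e.symm z) ∂(m.prod σ) := by
    intro h
    rw [← mpa.integral_comp' (fun z => h (e.symm z))]
    simp
  have transfer_b : ∀ h : (∀ j, S j) → ℝ,
      ∫ x, h x ∂(Measure.pi b) = ∫ z, h (e.symm z) ∂(n'.prod σ) := by
    intro h
    rw [← mpb.integral_comp' (fun z => h (e.symm z))]
    simp
  -- nonempty S i₀
  have hne : Nonempty (S i₀) := by
    by_contra h
    rw [not_nonempty_iff] at h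
    have h1 := measure_univ (μ := a i₀)
    rw [Set.univ_eq_empty_iff.mpr h, measure_empty] at h1
    simp at h1
  obtain ⟨s₀⟩ := hne
  let xX : ∀ j : Subtype p, S j := fun j => cast (congrArg S (show j.1 = i₀ from j.2).symm) s₀
  let G : (∀ j : Subtype p, S j) × (∀ j : {j // ¬ p j}, S j) → ℝ := fun z => Λ (e.symm z)
  let L : (∀ j : {j // ¬ p j}, S j) → ℝ := fun y => Λi (e.symm (xX, y))
  have hLprop : ∀ z, Λi (e.symm z) = L z.2 := by
    rintro ⟨zx, zy⟩
    apply hind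
    intro j hj
    show (Equiv.piEquivPiSubtypeProd p S).symm (zx, zy) j
      = (Equiv.piEquivPiSubtypeProd p S).symm (xX, zy) j
    simp only [Equiv.piEquivPiSubtypeProd_symm_apply]
    rw [dif_neg hj, dif_neg hj]
  have hL : ∀ z, ε * L z.2 ≤ G z ∧ G z ≤ ε⁻¹ * L z.2 := by
    intro z
    rw [← hLprop z]
    exact hcomp _
  -- transfer ht
  let u : (∀ j : Subtype p, S j) ≃ᵐ S i₀ := MeasurableEquiv.piUnique (fun j : Subtype p => S j)
  have mpua : MeasurePreserving u m (a i₀) := measurePreserving_piUnique _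
  have mpub : MeasurePreserving u n' (b i₀) := measurePreserving_piUnique _
  have ht' : ∀ g : (∀ j : Subtype p, S j) → ℝ, Measurable g → (∀ x, |g x| ≤ 1) →
      |(∫ x, g x ∂m) - ∫ x, g x ∂n'| ≤ t := by
    intro g hg hgb
    have h1 : ∫ x, g x ∂m = ∫ s, g (u.symm s) ∂(a i₀) := by
      have h0 := mpua.integral_comp' (fun s => g (u.symm s))
      simp only [MeasurableEquiv.symm_apply_apply] at h0
      exact h0
    have h2 : ∫ x, g x ∂n' = ∫ s, g (u.symm s) ∂(b i₀) := by
      have h0 := mpub.integral_comp' (fun s => g (u.symm s))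
      simp only [MeasurableEquiv.symm_apply_apply] at h0
      exact h0
    rw [h1, h2]
    exact ht _ (hg.comp u.symm.measurable) (fun s => hgb _)
  have main := step_prod m n' σ G (hΛm.comp e.symm.measurable) (fun z => hΛpos _)
    Cb (fun z => hΛb _) ε hε L
    (hΛim.comp (e.symm.measurable.comp measurable_prodMk_left)) hL t ht'
    (fun z => f (e.symm z)) (hfm.comp e.symm.measurable) (fun z => hfb _)
  rw [transfer_a (fun x => f x * Λ x), transfer_a Λ,
    transfer_b (fun x => f x * Λ x), transfer_b Λ]
  exact main

/-- Reweighting of product measures: if `Λ` is bounded, strictly positive, and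
for each coordinate `i` is `ε`-equivalent to a function `Λ^i` not depending on
the `i`-th coordinate, then the `Λ`-reweighted product measures satisfy
`‖μ_Λ − ν_Λ‖ ≤ (2/ε²) Σ_i ‖μ^i − ν^i‖`. -/
theorem product_reweighting_tv_bound {d : ℕ} (S : Fin d → Type*)
    [∀ i, MeasurableSpace (S i)]
    (μ ν : ∀ i, Measure (S i))
    [∀ i, IsProbabilityMeasure (μ i)] [∀ i, IsProbabilityMeasure (ν i)]
    (Λ : (∀ i, S i) → ℝ) (hΛm : Measurable Λ) (hΛpos : ∀ x, 0 < Λ x)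
    (Cb : ℝ) (hΛb : ∀ x, Λ x ≤ Cb)
    (ε : ℝ) (hε : 0 < ε)
    (hfac : ∀ i : Fin d, ∃ Λi : (∀ j, S j) → ℝ, Measurable Λi ∧
      (∀ x x' : ∀ j, S j, (∀ j, j ≠ i → x j = x' j) → Λi x = Λi x') ∧
      ∀ x, ε * Λi x ≤ Λ x ∧ Λ x ≤ ε⁻¹ * Λi x)
    (t : Fin d → ℝ)
    (ht : ∀ i, ∀ f : S i → ℝ, Measurable f → (∀ s, |f s| ≤ 1) →
      |(∫ s, f s ∂(μ i)) - ∫ s, f s ∂(ν i)| ≤ t i) :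
    ∀ f : (∀ i, S i) → ℝ, Measurable f → (∀ x, |f x| ≤ 1) →
      |(∫ x, f x * Λ x ∂(Measure.pi μ)) / (∫ x, Λ x ∂(Measure.pi μ)) -
        (∫ x, f x * Λ x ∂(Measure.pi ν)) / (∫ x, Λ x ∂(Measure.pi ν))|
        ≤ (2 / ε ^ 2) * ∑ i, t i := by
  intro f hfm hfb
  classical
  let fam : ℕ → ∀ i, Measure (S i) := fun k i => if (i : ℕ) < k then ν i else μ i
  haveI hfam : ∀ k i, IsProbabilityMeasure (fam k i) := by
    intro k i
    by_cases h : (i : ℕ) < k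
    · simpa [fam, h] using inferInstanceAs (IsProbabilityMeasure (ν i))
    · simpa [fam, h] using inferInstanceAs (IsProbabilityMeasure (μ i))
  let F : Measure (∀ i, S i) → ℝ := fun ρ => (∫ x, f x * Λ x ∂ρ) / (∫ x, Λ x ∂ρ)
  have hstep : ∀ k : ℕ, ∀ hk : k < d,
      |F (Measure.pi (fam k)) - F (Measure.pi (fam (k + 1)))| ≤ 2 / ε ^ 2 * t ⟨k, hk⟩ := by
    intro k hk
    obtain ⟨Λi, hΛim, hind, hcomp⟩ := hfac ⟨k, hk⟩
    have hab : ∀ j, j ≠ (⟨k, hk⟩ : Fin d) → fam k j = fam (k + 1) j := by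
      intro j hj
      have hjk : (j : ℕ) ≠ k := fun h => hj (Fin.ext h)
      show (if (j : ℕ) < k then ν j else μ j) = (if (j : ℕ) < k + 1 then ν j else μ j)
      by_cases h : (j : ℕ) < k
      · rw [if_pos h, if_pos (Nat.lt_succ_of_lt h)]
      · rw [if_neg h, if_neg (by omega)]
    have hk1 : fam k ⟨k, hk⟩ = μ ⟨k, hk⟩ := if_neg (lt_irrefl k)
    have hk2 : fam (k + 1) ⟨k, hk⟩ = ν ⟨k, hk⟩ := if_pos (Nat.lt_succ_self k)
    have ht' : ∀ g : S ⟨k, hk⟩ → ℝ, Measurable g → (∀ s, |g s| ≤ 1) →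
        |(∫ s, g s ∂(fam k ⟨k, hk⟩)) - ∫ s, g s ∂(fam (k + 1) ⟨k, hk⟩)| ≤ t ⟨k, hk⟩ := by
      intro g hg hgb
      rw [hk1, hk2]
      exact ht ⟨k, hk⟩ g hg hgb
    exact pi_step S (fam k) (fam (k + 1)) ⟨k, hk⟩ hab Λ hΛm hΛpos Cb hΛb ε hε
      Λi hΛim hind hcomp (t ⟨k, hk⟩) ht' f hfm hfb
  have tele : ∀ k : ℕ, k ≤ d →
      |F (Measure.pi (fam 0)) - F (Measure.pi (fam k))| ≤
        2 / ε ^ 2 * ∑ i : Fin d, (if (i : ℕ) < k then t i else 0) := by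
    intro k
    induction k with
    | zero => intro _; simp
    | succ k ih =>
      intro hk1
      have hk : k < d := hk1
      have h1 := ih (Nat.le_of_succ_le hk1)
      have h2 := hstep k hk
      have hsum : ∑ i : Fin d, (if (i : ℕ) < k + 1 then t i else 0)
          = (∑ i : Fin d, (if (i : ℕ) < k then t i else 0)) + t ⟨k, hk⟩ := by
        have hpt : ∀ i : Fin d, (if (i : ℕ) < k + 1 then t i else 0)
            = (if (i : ℕ) < k then t i else 0) + (if i = ⟨k, hk⟩ then t i else 0) := by
          intro i
          by_cases h : i = ⟨k, hk⟩
          · subst h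
            rw [if_pos (Nat.lt_succ_self k), if_neg (lt_irrefl k), if_pos rfl, zero_add]
          · have hik : (i : ℕ) ≠ k := fun hh => h (Fin.ext hh)
            rw [if_neg h, add_zero]
            by_cases h2 : (i : ℕ) < k
            · rw [if_pos h2, if_pos (Nat.lt_succ_of_lt h2)]
            · rw [if_neg h2, if_neg (by omega)]
        rw [Finset.sum_congr rfl (fun i _ => hpt i), Finset.sum_add_distrib,
          Finset.sum_ite_eq' Finset.univ (⟨k, hk⟩ : Fin d) t]
        simp
      calc |F (Measure.pi (fam 0)) - F (Measure.pi (fam (k + 1)))|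
          ≤ |F (Measure.pi (fam 0)) - F (Measure.pi (fam k))| +
            |F (Measure.pi (fam k)) - F (Measure.pi (fam (k + 1)))| := abs_sub_le _ _ _
        _ ≤ 2 / ε ^ 2 * (∑ i : Fin d, (if (i : ℕ) < k then t i else 0)) +
            2 / ε ^ 2 * t ⟨k, hk⟩ := add_le_add h1 h2
        _ = 2 / ε ^ 2 * ((∑ i : Fin d, (if (i : ℕ) < k then t i else 0)) + t ⟨k, hk⟩) := by
            ring
        _ = 2 / ε ^ 2 * ∑ i : Fin d, (if (i : ℕ) < k + 1 then t i else 0) := by rw [hsum]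
  have h0 : fam 0 = μ := by
    funext i
    simp [fam]
  have hd : fam d = ν := by
    funext i
    simp [fam, i.isLt]
  have hfin := tele d le_rfl
  rw [h0, hd] at hfin
  have hfs : ∑ i : Fin d, (if (i : ℕ) < d then t i else 0) = ∑ i, t i :=
    Finset.sum_congr rfl fun i _ => if_pos i.isLt
  rw [hfs] at hfin
  exact hfin
end

section
/- Let μ be a probability measure on a product space X = ∏_{v∈V} X^v (V finite), let 𝒦 be a partition of V into blocks, and let ℒ ⊆ 𝒦 be any subset of blocks. Let μ̂ = S^N μ be the empirical measure of N i.i.d. samples from μ, and for K ⊆ V let B^K ρ denote the marginal of ρ on ∏_{v∈K} X^v. Then ⫼⊗_{K∈ℒ} B^K μ − ⊗_{K∈ℒ} B^K μ̂⫼ ≤ 4·card(ℒ)/√N, where ⫼ρ − ρ'⫼ := sup_{|f|≤1} E[|ρ(f) − ρ'(f)|²]^{1/2}. -/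
open MeasureTheory ProbabilityTheory

section BlockMarginalAux

variable {Ω : Type*} [MeasurableSpace Ω] {E : Type*} [MeasurableSpace E]

private lemma iid_joint_law (P : Measure Ω) [IsProbabilityMeasure P]
    (μ : Measure E) [IsProbabilityMeasure μ]
    {N : ℕ} (Xs : Fin N → Ω → E) (hmeas : ∀ k, Measurable (Xs k))
    (hindep : iIndepFun Xs P) (hlaw : ∀ k, P.map (Xs k) = μ)
    {ι : Type*} [Fintype ι] (j : ι → Fin N) (hj : Function.Injective j) :
    P.map (fun ω i => Xs (j i) ω) = Measure.pi (fun _ : ι => μ) := by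
  classical
  refine (Measure.pi_eq fun s hs => ?_).symm
  have hF : Measurable (fun ω i => Xs (j i) ω) :=
    measurable_pi_lambda _ fun i => hmeas (j i)
  rw [Measure.map_apply hF (MeasurableSet.univ_pi hs)]
  set T : Fin N → Set E := fun n => ⋂ i ∈ Finset.univ.filter (fun i => j i = n), s i with hT
  have hTj : ∀ i₀ : ι, T (j i₀) = s i₀ := by
    intro i₀
    have : Finset.univ.filter (fun i => j i = j i₀) = {i₀} := by
      ext i; simp [hj.eq_iff]
    rw [hT]; simp only [this, Finset.mem_singleton, Set.iInter_iInter_eq_left]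
  have hTm : ∀ n, MeasurableSet (T n) := fun n =>
    MeasurableSet.biInter (Finset.countable_toSet _) (fun i _ => hs i)
  have hpre : (fun ω i => Xs (j i) ω) ⁻¹' Set.pi Set.univ s
      = ⋂ n ∈ Finset.univ.image j, Xs n ⁻¹' T n := by
    ext ω
    simp only [Set.mem_preimage, Set.mem_pi, Set.mem_univ, forall_true_left, Set.mem_iInter,
      Finset.mem_image, Finset.mem_univ, true_and]
    constructor
    · rintro h n ⟨i, rfl⟩
      rw [hTj i]; exact h i
    · intro h i
      have := h (j i) ⟨i, rfl⟩
      rwa [hTj i] at this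
  rw [hpre, hindep.measure_inter_preimage_eq_mul _ (fun n _ => hTm n),
    Finset.prod_image (fun i _ i' _ h => hj h)]
  refine Finset.prod_congr rfl fun i _ => ?_
  rw [hTj i, ← hlaw (j i), Measure.map_apply (hmeas (j i)) (hs i)]

private lemma iid_cov_zero (P : Measure Ω) [IsProbabilityMeasure P]
    (μ : Measure E) [IsProbabilityMeasure μ]
    {N : ℕ} (Xs : Fin N → Ω → E) (hmeas : ∀ k, Measurable (Xs k))
    (hindep : iIndepFun Xs P) (hlaw : ∀ k, P.map (Xs k) = μ)
    {d : ℕ} {G : (Fin d → E) → ℝ} (hG : Measurable G)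
    {kk kk' : Fin d → Fin N} (hinj : Function.Injective (Sum.elim kk kk')) :
    ∫ ω, G (fun k => Xs (kk k) ω) * G (fun k => Xs (kk' k) ω) ∂P
      = (∫ x, G x ∂(Measure.pi fun _ : Fin d => μ))
          * (∫ x, G x ∂(Measure.pi fun _ : Fin d => μ)) := by
  have hjoint := iid_joint_law P μ Xs hmeas hindep hlaw (Sum.elim kk kk') hinj
  have hH : Measurable fun y : (Fin d ⊕ Fin d) → E =>
      G (fun k => y (Sum.inl k)) * G (fun k => y (Sum.inr k)) :=
    (hG.comp (measurable_pi_lambda _ fun k => measurable_pi_apply _)).mul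
      (hG.comp (measurable_pi_lambda _ fun k => measurable_pi_apply _))
  have h1 : ∫ ω, G (fun k => Xs (kk k) ω) * G (fun k => Xs (kk' k) ω) ∂P
      = ∫ y, G (fun k => y (Sum.inl k)) * G (fun k => y (Sum.inr k))
          ∂(Measure.pi fun _ : Fin d ⊕ Fin d => μ) := by
    rw [← hjoint, integral_map (measurable_pi_lambda _ fun i => hmeas _).aemeasurable
      hH.aestronglyMeasurable]
    rfl
  have h2 := (measurePreserving_sumPiEquivProdPi_symm (fun _ : Fin d ⊕ Fin d => μ)).integral_comp
      (MeasurableEquiv.measurableEmbedding _)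
      (fun y => G (fun k => y (Sum.inl k)) * G (fun k => y (Sum.inr k)))
  rw [h1, ← h2]
  exact integral_prod_mul G G

private lemma pow_le_descFactorial_add (n : ℕ) :
    ∀ m : ℕ, n ^ m ≤ n.descFactorial m + m.choose 2 * n ^ (m - 1)
  | 0 => by simp
  | 1 => by simp
  | (m+2) => by
    have ih := pow_le_descFactorial_add n (m+1)
    have hstep : n * n.descFactorial (m+1)
        ≤ n.descFactorial (m+2) + (m+1) * n.descFactorial (m+1) := by
      rcases le_or_gt n (m+1) with h | h
      · calc n * n.descFactorial (m+1) ≤ (m+1) * n.descFactorial (m+1) :=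
              Nat.mul_le_mul_right _ h
          _ ≤ _ := Nat.le_add_left _ _
      · have hd : n.descFactorial (m+2) = (n - (m+1)) * n.descFactorial (m+1) :=
          Nat.descFactorial_succ n (m+1)
        calc n * n.descFactorial (m+1)
            = ((n - (m+1)) + (m+1)) * n.descFactorial (m+1) := by
              rw [Nat.sub_add_cancel h.le]
          _ = (n - (m+1)) * n.descFactorial (m+1) + (m+1) * n.descFactorial (m+1) := by ring
          _ = n.descFactorial (m+2) + (m+1) * n.descFactorial (m+1) := by rw [hd]
          _ ≤ n.descFactorial (m+2) + (m+1) * n.descFactorial (m+1) := le_rfl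
    have hds : n.descFactorial (m+1) ≤ n ^ (m+1) := Nat.descFactorial_le_pow _ _
    have hch : (m+2).choose 2 = (m+1).choose 2 + (m+1) := by
      rw [Nat.choose_succ_succ]
      simp [Nat.choose_one_right, Nat.add_comm]
    calc n ^ (m+2) = n * n ^ (m+1) := by ring
      _ ≤ n * (n.descFactorial (m+1) + (m+1).choose 2 * n ^ m) := Nat.mul_le_mul_left n ih
      _ = n * n.descFactorial (m+1) + (m+1).choose 2 * (n * n ^ m) := by ring
      _ = n * n.descFactorial (m+1) + (m+1).choose 2 * n ^ (m+1) := by ring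
      _ ≤ (n.descFactorial (m+2) + (m+1) * n.descFactorial (m+1))
            + (m+1).choose 2 * n ^ (m+1) := Nat.add_le_add_right hstep _
      _ ≤ (n.descFactorial (m+2) + (m+1) * n ^ (m+1)) + (m+1).choose 2 * n ^ (m+1) := by
            exact Nat.add_le_add_right (Nat.add_le_add_left (Nat.mul_le_mul_left _ hds) _) _
      _ = n.descFactorial (m+2) + (m+2).choose 2 * n ^ (m+1) := by rw [hch]; ring

private lemma bad_pairs_card (d N : ℕ) :
    (Finset.univ.filter (fun p : (Fin d → Fin N) × (Fin d → Fin N) =>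
      ¬ Function.Injective (Sum.elim p.1 p.2))).card ≤ 4 * d^2 * N ^ (d + d - 1) := by
  classical
  have hb : (Finset.univ.filter (fun p : (Fin d → Fin N) × (Fin d → Fin N) =>
        ¬ Function.Injective (Sum.elim p.1 p.2))).card
      = (Finset.univ.filter fun h : (Fin d ⊕ Fin d) → Fin N => ¬ Function.Injective h).card := by
    refine Finset.card_bij (fun p _ => Sum.elim p.1 p.2) ?_ ?_ ?_
    · intro p hp; simp only [Finset.mem_filter, Finset.mem_univ, true_and] at hp ⊢; exact hp
    · intro p hp q hq hpq
      exact Prod.ext (funext fun k => congrFun hpq (Sum.inl k))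
        (funext fun k => congrFun hpq (Sum.inr k))
    · intro h hh
      refine ⟨(fun k => h (Sum.inl k), fun k => h (Sum.inr k)), ?_, ?_⟩
      · simp only [Finset.mem_filter, Finset.mem_univ, true_and] at hh ⊢
        have : Sum.elim (fun k => h (Sum.inl k)) (fun k => h (Sum.inr k)) = h := by
          funext x; cases x <;> rfl
        rw [this]; exact hh
      · funext x; cases x <;> rfl
  rw [hb]
  have h3 : (Finset.univ.filter fun h : (Fin d ⊕ Fin d) → Fin N =>
        ¬ Function.Injective h).card
      = Fintype.card ((Fin d ⊕ Fin d) → Fin N)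
        - Fintype.card {h : (Fin d ⊕ Fin d) → Fin N // Function.Injective h} := by
    rw [← Fintype.card_subtype_compl, Fintype.card_subtype]
  have h4 : Fintype.card {h : (Fin d ⊕ Fin d) → Fin N // Function.Injective h}
      = N.descFactorial (d + d) := by
    rw [Fintype.card_congr (Equiv.subtypeInjectiveEquivEmbedding _ _),
      Fintype.card_embedding_eq]
    simp
  have h5 : Fintype.card ((Fin d ⊕ Fin d) → Fin N) = N ^ (d + d) := by
    simp [Fintype.card_fun]
  rw [h3, h4, h5]
  have h7 : (d + d).choose 2 ≤ 4 * d ^ 2 := by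
    calc (d + d).choose 2 ≤ (d + d) ^ 2 := Nat.choose_le_pow _ _
      _ = 4 * d ^ 2 := by ring
  have h8 : N ^ (d + d) ≤ N.descFactorial (d + d) + 4 * d ^ 2 * N ^ (d + d - 1) :=
    (pow_le_descFactorial_add N (d + d)).trans
      (Nat.add_le_add_left (Nat.mul_le_mul_right _ h7) _)
  exact Nat.sub_le_iff_le_add.2 (h8.trans_eq (Nat.add_comm _ _))

end BlockMarginalAux

/-- Sampling error of products of block marginals: for disjoint blocks
`K_1,…,K_d ⊆ V` and the empirical measure `μ̂ = S^N μ` of `N` i.i.d. samples from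
`μ`, one has `⫼⊗_k B^{K_k} μ − ⊗_k B^{K_k} μ̂⫼ ≤ 4d/√N`, where
`(⊗_k B^{K_k} ρ)(f) = ∫⋯∫ f(x_1^{K_1},…,x_d^{K_d}) ρ(dx_1)⋯ρ(dx_d)`. -/
theorem block_marginal_sampling_bound {V : Type*} [Fintype V]
    (Xsp : V → Type*) [∀ v, MeasurableSpace (Xsp v)]
    {Ω : Type*} [MeasurableSpace Ω] (P : Measure Ω) [IsProbabilityMeasure P]
    (μ : Measure (∀ v, Xsp v)) [IsProbabilityMeasure μ]
    (N : ℕ) (hN : 0 < N)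
    (Xs : Fin N → Ω → ∀ v, Xsp v) (hmeas : ∀ k, Measurable (Xs k))
    (hindep : iIndepFun Xs P)
    (hlaw : ∀ k, P.map (Xs k) = μ)
    (d : ℕ) (K : Fin d → Finset V)
    (hdisj : ∀ k k', k ≠ k' → Disjoint (K k) (K k'))
    (f : (∀ k : Fin d, ∀ v : {v // v ∈ K k}, Xsp v.1) → ℝ)
    (hf : Measurable f) (hfb : ∀ x, |f x| ≤ 1) :
    Real.sqrt (∫ ω,
        |(∫ xs, f (fun k v => xs k v.1) ∂(Measure.pi fun _ : Fin d => μ)) -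
          (N : ℝ)⁻¹ ^ d *
            ∑ kk : Fin d → Fin N, f (fun k v => Xs (kk k) ω v.1)| ^ 2 ∂P)
      ≤ 4 * d / Real.sqrt N := by
  classical
  have hN0 : ((N : ℝ)) ≠ 0 := Nat.cast_ne_zero.2 hN.ne'
  have hNpos : (0 : ℝ) < N := Nat.cast_pos.2 hN
  set π : Measure (Fin d → ∀ v, Xsp v) := Measure.pi fun _ : Fin d => μ with hπ
  set F : (Fin d → ∀ v, Xsp v) → ℝ := fun x => f (fun k v => x k v.1) with hFdef
  have hF : Measurable F := hf.comp (measurable_pi_lambda _ fun k =>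
    measurable_pi_lambda _ fun v => (measurable_pi_apply v.1).comp (measurable_pi_apply k))
  have hFb : ∀ x, |F x| ≤ 1 := fun x => hfb _
  have hπprob : IsProbabilityMeasure π := by rw [hπ]; infer_instance
  set I : ℝ := ∫ x, F x ∂π with hIdef
  have hIb : |I| ≤ 1 := by
    rw [hIdef, ← Real.norm_eq_abs]
    refine le_trans (norm_integral_le_of_norm_le_const (C := 1)
      (ae_of_all _ fun x => ?_)) (by simp)
    rw [Real.norm_eq_abs]; exact hFb x
  set G : (Fin d → ∀ v, Xsp v) → ℝ := fun x => I - F x with hGdef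
  have hG : Measurable G := measurable_const.sub hF
  have hGb : ∀ x, |G x| ≤ 2 := fun x => by
    calc |I - F x| ≤ |I| + |F x| := abs_sub _ _
      _ ≤ 1 + 1 := add_le_add hIb (hFb x)
      _ = 2 := by norm_num
  have hGint : ∫ x, G x ∂π = 0 := by
    have hFint : Integrable F π := ⟨hF.aestronglyMeasurable,
      HasFiniteIntegral.of_bounded (C := 1)
        (ae_of_all _ fun x => by simpa [Real.norm_eq_abs] using hFb x)⟩
    rw [hGdef]
    rw [integral_sub (integrable_const I) hFint, integral_const]
    simp [measure_univ, hIdef]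
  have hgm : ∀ kk : Fin d → Fin N, Measurable (fun ω => G (fun k => Xs (kk k) ω)) := fun kk =>
    hG.comp (measurable_pi_lambda _ fun k => hmeas (kk k))
  have hint : ∀ kk kk' : Fin d → Fin N,
      Integrable (fun ω => G (fun k => Xs (kk k) ω) * G (fun k => Xs (kk' k) ω)) P :=
    fun kk kk' => ⟨((hgm kk).mul (hgm kk')).aestronglyMeasurable,
      HasFiniteIntegral.of_bounded (C := 4) (ae_of_all _ fun ω => by
        rw [Real.norm_eq_abs, abs_mul]
        calc |G (fun k => Xs (kk k) ω)| * |G (fun k => Xs (kk' k) ω)| ≤ 2 * 2 :=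
            mul_le_mul (hGb _) (hGb _) (abs_nonneg _) (by norm_num)
          _ = 4 := by norm_num)⟩
  have hcov : ∀ kk kk' : Fin d → Fin N,
      |∫ ω, G (fun k => Xs (kk k) ω) * G (fun k => Xs (kk' k) ω) ∂P| ≤ 4 := by
    intro kk kk'
    rw [← Real.norm_eq_abs]
    refine le_trans (norm_integral_le_of_norm_le_const (C := 4)
      (ae_of_all _ fun ω => ?_)) (by simp)
    rw [Real.norm_eq_abs, abs_mul]
    calc |G (fun k => Xs (kk k) ω)| * |G (fun k => Xs (kk' k) ω)| ≤ 2 * 2 :=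
        mul_le_mul (hGb _) (hGb _) (abs_nonneg _) (by norm_num)
      _ = 4 := by norm_num
  have hzero : ∀ kk kk' : Fin d → Fin N, Function.Injective (Sum.elim kk kk') →
      ∫ ω, G (fun k => Xs (kk k) ω) * G (fun k => Xs (kk' k) ω) ∂P = 0 := by
    intro kk kk' hinj
    rw [iid_cov_zero P μ Xs hmeas hindep hlaw hG hinj]
    rw [← hπ, hGint, mul_zero]
  -- pointwise rewriting of the deviation
  have hcardsum : ∑ _kk : Fin d → Fin N, I = (N:ℝ)^d * I := by
    rw [Finset.sum_const, Finset.card_univ]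
    simp [Fintype.card_fun, nsmul_eq_mul]
  have hpt : ∀ ω, |I - (N:ℝ)⁻¹ ^ d * ∑ kk : Fin d → Fin N, F (fun k => Xs (kk k) ω)| ^ 2
      = ((N:ℝ)⁻¹ ^ d * (N:ℝ)⁻¹ ^ d) * ∑ kk : Fin d → Fin N, ∑ kk' : Fin d → Fin N,
          G (fun k => Xs (kk k) ω) * G (fun k => Xs (kk' k) ω) := by
    intro ω
    have h1 : I - (N:ℝ)⁻¹ ^ d * ∑ kk : Fin d → Fin N, F (fun k => Xs (kk k) ω)
        = (N:ℝ)⁻¹ ^ d * ∑ kk : Fin d → Fin N, G (fun k => Xs (kk k) ω) := by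
      have hsub : ∑ kk : Fin d → Fin N, G (fun k => Xs (kk k) ω)
          = (∑ _kk : Fin d → Fin N, I) - ∑ kk : Fin d → Fin N, F (fun k => Xs (kk k) ω) := by
        rw [← Finset.sum_sub_distrib]
      rw [hsub, hcardsum, mul_sub, ← mul_assoc, ← mul_pow, inv_mul_cancel₀ hN0, one_pow, one_mul]
    rw [sq_abs, h1]
    rw [mul_pow]
    rw [sq ((N:ℝ)⁻¹ ^ d), sq, Finset.sum_mul_sum]
  have hptf : (fun ω => |I - (N:ℝ)⁻¹ ^ d * ∑ kk : Fin d → Fin N, F (fun k => Xs (kk k) ω)| ^ 2)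
      = fun ω => ((N:ℝ)⁻¹ ^ d * (N:ℝ)⁻¹ ^ d) * ∑ kk : Fin d → Fin N, ∑ kk' : Fin d → Fin N,
          G (fun k => Xs (kk k) ω) * G (fun k => Xs (kk' k) ω) := funext hpt
  -- the bad pairs
  set B : Finset ((Fin d → Fin N) × (Fin d → Fin N)) :=
    Finset.univ.filter (fun p => ¬ Function.Injective (Sum.elim p.1 p.2)) with hBdef
  have hBcard : (B.card : ℝ) ≤ 4 * (d:ℝ)^2 * (N:ℝ) ^ (d + d - 1) := by
    have := bad_pairs_card d N
    calc (B.card : ℝ) ≤ ((4 * d^2 * N ^ (d + d - 1) : ℕ) : ℝ) := Nat.cast_le.2 this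
      _ = 4 * (d:ℝ)^2 * (N:ℝ) ^ (d + d - 1) := by push_cast; ring
  -- the integral computation
  have hmain : ∫ ω, |I - (N:ℝ)⁻¹ ^ d * ∑ kk : Fin d → Fin N, F (fun k => Xs (kk k) ω)| ^ 2 ∂P
      ≤ 16 * (d:ℝ)^2 / N := by
    rw [hptf, integral_const_mul,
      integral_finset_sum _ (fun kk _ => integrable_finset_sum _ (fun kk' _ => hint kk kk'))]
    have hswap : ∀ kk : Fin d → Fin N,
        ∫ ω, ∑ kk' : Fin d → Fin N, G (fun k => Xs (kk k) ω) * G (fun k => Xs (kk' k) ω) ∂P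
        = ∑ kk' : Fin d → Fin N, ∫ ω, G (fun k => Xs (kk k) ω) * G (fun k => Xs (kk' k) ω) ∂P :=
      fun kk => integral_finset_sum _ (fun kk' _ => hint kk kk')
    rw [Finset.sum_congr rfl (fun kk _ => hswap kk)]
    have hdouble : ∑ kk : Fin d → Fin N, ∑ kk' : Fin d → Fin N,
          ∫ ω, G (fun k => Xs (kk k) ω) * G (fun k => Xs (kk' k) ω) ∂P
        = ∑ p ∈ (Finset.univ ×ˢ Finset.univ :
              Finset ((Fin d → Fin N) × (Fin d → Fin N))),
            ∫ ω, G (fun k => Xs (p.1 k) ω) * G (fun k => Xs (p.2 k) ω) ∂P := by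
      rw [Finset.sum_product]
    have hsplit : ∑ p ∈ (Finset.univ ×ˢ Finset.univ :
          Finset ((Fin d → Fin N) × (Fin d → Fin N))),
            ∫ ω, G (fun k => Xs (p.1 k) ω) * G (fun k => Xs (p.2 k) ω) ∂P ≤ 4 * B.card := by
      rw [Finset.univ_product_univ,
        ← Finset.sum_filter_add_sum_filter_not Finset.univ
          (fun p : (Fin d → Fin N) × (Fin d → Fin N) =>
            Function.Injective (Sum.elim p.1 p.2))]
      have hz : ∑ p ∈ Finset.univ.filter (fun p : (Fin d → Fin N) × (Fin d → Fin N) =>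
            Function.Injective (Sum.elim p.1 p.2)),
          ∫ ω, G (fun k => Xs (p.1 k) ω) * G (fun k => Xs (p.2 k) ω) ∂P = 0 :=
        Finset.sum_eq_zero fun p hp =>
          hzero p.1 p.2 (Finset.mem_filter.1 hp).2
      rw [hz, zero_add]
      calc ∑ p ∈ B, ∫ ω, G (fun k => Xs (p.1 k) ω) * G (fun k => Xs (p.2 k) ω) ∂P
          ≤ ∑ _p ∈ B, (4:ℝ) := Finset.sum_le_sum fun p _ =>
            (le_abs_self _).trans (hcov p.1 p.2)
        _ = B.card * 4 := by rw [Finset.sum_const, nsmul_eq_mul]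
        _ = 4 * B.card := by ring
    have hc0 : (0:ℝ) ≤ (N:ℝ)⁻¹ ^ d * (N:ℝ)⁻¹ ^ d := by positivity
    calc ((N:ℝ)⁻¹ ^ d * (N:ℝ)⁻¹ ^ d) * ∑ kk : Fin d → Fin N, ∑ kk' : Fin d → Fin N,
          ∫ ω, G (fun k => Xs (kk k) ω) * G (fun k => Xs (kk' k) ω) ∂P
        ≤ ((N:ℝ)⁻¹ ^ d * (N:ℝ)⁻¹ ^ d) * (4 * B.card) := by
          apply mul_le_mul_of_nonneg_left _ hc0
          rw [hdouble]; exact hsplit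
      _ ≤ ((N:ℝ)⁻¹ ^ d * (N:ℝ)⁻¹ ^ d) * (4 * (4 * (d:ℝ)^2 * (N:ℝ) ^ (d + d - 1))) := by
          apply mul_le_mul_of_nonneg_left _ hc0
          apply mul_le_mul_of_nonneg_left hBcard (by norm_num)
      _ ≤ 16 * (d:ℝ)^2 / N := by
          rcases Nat.eq_zero_or_pos d with hd | hd
          · subst hd; simp
          · have he : d + d - 1 + 1 = d + d := by omega
            have hpow : (N:ℝ)⁻¹ ^ d * (N:ℝ)⁻¹ ^ d = ((N:ℝ) ^ (d + d - 1) * N)⁻¹ := by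
              rw [← pow_add, inv_pow, ← pow_succ, he]
            rw [hpow]
            rw [mul_inv, div_eq_mul_inv]
            have hp0 : (0:ℝ) < (N:ℝ) ^ (d + d - 1) := by positivity
            calc ((N:ℝ) ^ (d + d - 1))⁻¹ * (N:ℝ)⁻¹ * (4 * (4 * (d:ℝ)^2 * (N:ℝ) ^ (d + d - 1)))
                = (16 * (d:ℝ)^2) * ((N:ℝ) ^ (d + d - 1) * ((N:ℝ) ^ (d + d - 1))⁻¹) * (N:ℝ)⁻¹ := by
                  ring
              _ = 16 * (d:ℝ)^2 * (N:ℝ)⁻¹ := by rw [mul_inv_cancel₀ hp0.ne']; ring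
              _ ≤ 16 * (d:ℝ)^2 * (N:ℝ)⁻¹ := le_rfl
  -- conclude
  have hrhs : (16 * (d:ℝ)^2 / N) = (4 * d / Real.sqrt N)^2 := by
    rw [div_pow, mul_pow, Real.sq_sqrt (Nat.cast_nonneg N)]
    norm_num
  have hfinal : Real.sqrt (∫ ω,
      |I - (N:ℝ)⁻¹ ^ d * ∑ kk : Fin d → Fin N, F (fun k => Xs (kk k) ω)| ^ 2 ∂P)
      ≤ 4 * d / Real.sqrt N := by
    refine le_trans (Real.sqrt_le_sqrt (hmain.trans_eq hrhs)) ?_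
    rw [Real.sqrt_sq (by positivity)]
  exact hfinal
end

section
/- Filter stability for strongly mixing models: suppose the Markov transition density satisfies ε ≤ p(x, z) ≤ ε^{−1} for all x, z (with respect to a reference measure ψ), and let F_n denote the one-step filtering update with likelihood g(·, Y_n) > 0, i.e., (F_n ρ)(f) = ∫ f(x') g(x', Y_n) p(x, x') ψ(dx') ρ(dx) / ∫ g(x', Y_n) p(x, x') ψ(dx') ρ(dx). Then for all probability measures ρ, ρ' and s < n, ‖F_n ⋯ F_{s+1} ρ − F_n ⋯ F_{s+1} ρ'‖ ≤ ε^{−2}(1 − ε²)^{n−s} ‖ρ − ρ'‖ in total variation. -/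
open MeasureTheory

/-- One step of the filtering recursion: the (normalized) measure with density
`z ↦ g(z) ∫ p(x,z) ρ(dx)` with respect to the reference measure `ψ`. -/
noncomputable def filterStep {X : Type*} [MeasurableSpace X]
    (ψ : Measure X) (g : X → ℝ) (p : X → X → ℝ) (ρ : Measure X) : Measure X :=
  ((ψ.withDensity fun z => ENNReal.ofReal (g z * ∫ x, p x z ∂ρ)) Set.univ)⁻¹ •
    ψ.withDensity fun z => ENNReal.ofReal (g z * ∫ x, p x z ∂ρ)

/-- The composed filtering maps `F_n ∘ ⋯ ∘ F_{s+1}` (identity if `n ≤ s`). -/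
noncomputable def filterIter {X : Type*} [MeasurableSpace X]
    (ψ : Measure X) (g : ℕ → X → ℝ) (p : X → X → ℝ) (s : ℕ) :
    ℕ → Measure X → Measure X
  | 0 => id
  | n + 1 => if n + 1 ≤ s then id else filterStep ψ (g (n + 1)) p ∘ filterIter ψ g p s n

open scoped NNReal ENNReal

set_option maxHeartbeats 1000000
namespace FilterStabilityAux

lemma integrable_of_bdd {α : Type*} [MeasurableSpace α] {μ : Measure α} [IsFiniteMeasure μ]
    {f : α → ℝ} {C : ℝ} (hf : Measurable f) (hC : ∀ x, |f x| ≤ C) : Integrable f μ :=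
  (integrable_const C).mono' hf.aestronglyMeasurable
    (ae_of_all _ fun x => by simpa [Real.norm_eq_abs] using hC x)

lemma integral_pos_of_pos {α : Type*} [MeasurableSpace α] {μ : Measure α} (hμ : μ ≠ 0)
    {f : α → ℝ} (hf : Integrable f μ) (hpos : ∀ x, 0 < f x) : 0 < ∫ x, f x ∂μ := by
  rw [integral_pos_iff_support_of_nonneg (fun x => (hpos x).le) hf]
  have hs : Function.support f = Set.univ := Set.eq_univ_of_forall (fun x => (hpos x).ne')
  rw [hs]
  exact Measure.measure_univ_pos.mpr hμ

variable {X : Type*} [MeasurableSpace X]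

noncomputable def K (ψ : Measure X) (gk : X → ℝ) (p : X → X → ℝ) (f : X → ℝ) : X → ℝ :=
  fun x => ∫ z, gk z * p x z * f z ∂ψ

def Sand (lo hi : ℝ) (u v : X → ℝ) : Prop :=
  Measurable u ∧ Measurable v ∧ (∃ C, ∀ x, |u x| ≤ C) ∧ (∀ x, 0 < v x) ∧
    (∃ C, ∀ x, v x ≤ C) ∧ (∀ x, lo * v x ≤ u x ∧ u x ≤ hi * v x)

lemma K_measurable {ψ : Measure X} [SFinite ψ] {gk : X → ℝ} (hgk : Measurable gk)
    {p : X → X → ℝ} (hpm : Measurable (Function.uncurry p)) {f : X → ℝ} (hf : Measurable f) :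
    Measurable (K ψ gk p f) := by
  have hpm' : Measurable fun q : X × X => p q.1 q.2 := hpm
  have : StronglyMeasurable fun q : X × X => gk q.2 * p q.1 q.2 * f q.2 :=
    (((hgk.comp measurable_snd).mul hpm').mul (hf.comp measurable_snd)).stronglyMeasurable
  exact this.integral_prod_right'.measurable

lemma K_step {ψ : Measure X} [IsFiniteMeasure ψ] [Nonempty X] (hψ0 : ψ ≠ 0)
    {gk : X → ℝ} (hgkm : Measurable gk) (hgkpos : ∀ x, 0 < gk x) {Bg : ℝ} (hBg : ∀ x, gk x ≤ Bg)
    {p : X → X → ℝ} (hpm : Measurable (Function.uncurry p))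
    {ε : ℝ} (hε0 : 0 < ε) (hε1 : ε ≤ 1) (hp : ∀ x z, ε ≤ p x z ∧ p x z ≤ ε⁻¹)
    {lo hi : ℝ} {u v : X → ℝ} (h : Sand lo hi u v) :
    ∃ lo' hi', lo ≤ lo' ∧ hi' ≤ hi ∧ hi' - lo' = (1 - ε ^ 2) * (hi - lo) ∧
      Sand lo' hi' (K ψ gk p u) (K ψ gk p v) ∧
      ∀ x x', K ψ gk p v x ≤ ε⁻¹ ^ 2 * K ψ gk p v x' := by
  obtain ⟨hum, hvm, ⟨Cu, hCu⟩, hvpos, ⟨Cv, hCv⟩, hsand⟩ := h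
  have hεinv : (0:ℝ) < ε⁻¹ := inv_pos.mpr hε0
  have hBg0 : 0 < Bg := lt_of_lt_of_le (hgkpos (Classical.arbitrary X)) (hBg _)
  have hvabs : ∀ x, |v x| ≤ Cv := fun x => by rw [abs_of_pos (hvpos x)]; exact hCv x
  have hCu0 : 0 ≤ Cu := le_trans (abs_nonneg _) (hCu (Classical.arbitrary X))
  have hCv0 : 0 ≤ Cv := le_trans (abs_nonneg _) (hvabs (Classical.arbitrary X))
  have hpx : ∀ x, Measurable fun z => p x z := fun x => hpm.comp measurable_prodMk_left
  -- integrability over ψ of gk * f for bounded f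
  have igbd : ∀ (f : X → ℝ) (C : ℝ), Measurable f → (∀ z, |f z| ≤ C) →
      Integrable (fun z => gk z * f z) ψ := by
    intro f C hf hC
    refine integrable_of_bdd (hgkm.mul hf) (C := Bg * C) (fun z => ?_)
    rw [abs_mul, abs_of_pos (hgkpos z)]
    exact mul_le_mul (hBg z) (hC z) (abs_nonneg _) hBg0.le
  have igu : Integrable (fun z => gk z * u z) ψ := igbd u Cu hum hCu
  have igv : Integrable (fun z => gk z * v z) ψ := igbd v Cv hvm hvabs
  set Iu := ∫ z, gk z * u z ∂ψ with hIu_def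
  set Iv := ∫ z, gk z * v z ∂ψ with hIv_def
  have hIv : 0 < Iv := integral_pos_of_pos hψ0 igv (fun z => mul_pos (hgkpos z) (hvpos z))
  have hloIv : lo * Iv ≤ Iu := by
    have h1 : ∫ z, lo * (gk z * v z) ∂ψ ≤ ∫ z, gk z * u z ∂ψ := by
      refine integral_mono (igv.const_mul lo) igu (fun z => ?_)
      have := mul_le_mul_of_nonneg_left (hsand z).1 (hgkpos z).le
      nlinarith [this]
    rwa [integral_const_mul] at h1
  have hIvhi : Iu ≤ hi * Iv := by
    have h1 : ∫ z, gk z * u z ∂ψ ≤ ∫ z, hi * (gk z * v z) ∂ψ := by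
      refine integral_mono igu (igv.const_mul hi) (fun z => ?_)
      have := mul_le_mul_of_nonneg_left (hsand z).2 (hgkpos z).le
      nlinarith [this]
    rwa [integral_const_mul] at h1
  set ν := Iu / Iv with hν_def
  have hνlo : lo ≤ ν := (le_div_iff₀ hIv).mpr hloIv
  have hνhi : ν ≤ hi := (div_le_iff₀ hIv).mpr hIvhi
  have hIu_eq : Iu = ν * Iv := (div_mul_cancel₀ _ hIv.ne').symm
  -- pointwise bound for integrands of K
  have habs : ∀ (f : X → ℝ) (C : ℝ), (∀ z, |f z| ≤ C) →
      ∀ x z, |gk z * p x z * f z| ≤ Bg * ε⁻¹ * C := by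
    intro f C hC x z
    have hpz0 : 0 < p x z := lt_of_lt_of_le hε0 (hp x z).1
    rw [abs_mul, abs_mul, abs_of_pos (hgkpos z), abs_of_pos hpz0]
    exact mul_le_mul (mul_le_mul (hBg z) (hp x z).2 hpz0.le hBg0.le) (hC z) (abs_nonneg _)
      (by positivity)
  have iK : ∀ (f : X → ℝ) (C : ℝ), Measurable f → (∀ z, |f z| ≤ C) →
      ∀ x, Integrable (fun z => gk z * p x z * f z) ψ := by
    intro f C hf hC x
    exact integrable_of_bdd ((hgkm.mul (hpx x)).mul hf) (habs f C hC x)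
  have iKu := iK u Cu hum hCu
  have iKv := iK v Cv hvm hvabs
  -- bounds on K v
  have hKv_ub : ∀ x, K ψ gk p v x ≤ ε⁻¹ * Iv := by
    intro x
    have h1 : ∫ z, gk z * p x z * v z ∂ψ ≤ ∫ z, ε⁻¹ * (gk z * v z) ∂ψ := by
      refine integral_mono (iKv x) (igv.const_mul _) (fun z => ?_)
      have := mul_le_mul_of_nonneg_left (hp x z).2 (mul_nonneg (hgkpos z).le (hvpos z).le)
      nlinarith [this]
    rwa [integral_const_mul] at h1
  have hKv_lb : ∀ x, ε * Iv ≤ K ψ gk p v x := by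
    intro x
    have h1 : ∫ z, ε * (gk z * v z) ∂ψ ≤ ∫ z, gk z * p x z * v z ∂ψ := by
      refine integral_mono (igv.const_mul _) (iKv x) (fun z => ?_)
      have := mul_le_mul_of_nonneg_left (hp x z).1 (mul_nonneg (hgkpos z).le (hvpos z).le)
      nlinarith [this]
    rwa [integral_const_mul] at h1
  have hKvpos : ∀ x, 0 < K ψ gk p v x := fun x =>
    lt_of_lt_of_le (mul_pos hε0 hIv) (hKv_lb x)
  have hratio : ∀ x x', K ψ gk p v x ≤ ε⁻¹ ^ 2 * K ψ gk p v x' := by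
    intro x x'
    calc K ψ gk p v x ≤ ε⁻¹ * Iv := hKv_ub x
      _ = ε⁻¹ ^ 2 * (ε * Iv) := by field_simp
      _ ≤ ε⁻¹ ^ 2 * K ψ gk p v x' := by
          exact mul_le_mul_of_nonneg_left (hKv_lb x') (by positivity)
  -- the contraction estimates
  have key_ub : ∀ x, K ψ gk p u x ≤ (ε ^ 2 * ν + (1 - ε ^ 2) * hi) * K ψ gk p v x := by
    intro x
    have ediff : (fun z => gk z * (hi * v z - u z)) =
        fun z => hi * (gk z * v z) - gk z * u z := by funext z; ring
    have idiff : Integrable (fun z => gk z * (hi * v z - u z)) ψ := by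
      rw [ediff]; exact (igv.const_mul hi).sub igu
    have eint : ∫ z, gk z * (hi * v z - u z) ∂ψ = hi * Iv - Iu := by
      rw [ediff, integral_sub (igv.const_mul hi) igu, integral_const_mul]
    have e1 : hi * K ψ gk p v x - K ψ gk p u x
        = ∫ z, gk z * p x z * (hi * v z - u z) ∂ψ := by
      rw [show hi * K ψ gk p v x = ∫ z, hi * (gk z * p x z * v z) ∂ψ from
        (integral_const_mul _ _).symm, K, ← integral_sub ((iKv x).const_mul hi) (iKu x)]
      congr 1; funext z; ring
    have e2 : ε * (hi * Iv - Iu) ≤ ∫ z, gk z * p x z * (hi * v z - u z) ∂ψ := by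
      have h1 : ∫ z, ε * (gk z * (hi * v z - u z)) ∂ψ
          ≤ ∫ z, gk z * p x z * (hi * v z - u z) ∂ψ := by
        refine integral_mono (idiff.const_mul _) ?_ (fun z => ?_)
        · have : (fun z => gk z * p x z * (hi * v z - u z)) =
              fun z => hi * (gk z * p x z * v z) - gk z * p x z * u z := by funext z; ring
          rw [this]; exact ((iKv x).const_mul hi).sub (iKu x)
        · have hnn : 0 ≤ gk z * (hi * v z - u z) :=
            mul_nonneg (hgkpos z).le (by linarith [(hsand z).2])
          have := mul_le_mul_of_nonneg_left (hp x z).1 hnn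
          nlinarith [this]
      rwa [integral_const_mul, eint] at h1
    have e3 : ε * K ψ gk p v x ≤ Iv := by
      have := mul_le_mul_of_nonneg_left (hKv_ub x) hε0.le
      nlinarith [this, mul_inv_cancel₀ hε0.ne']
    have e5 : ε * ((hi - ν) * (ε * K ψ gk p v x)) ≤ hi * K ψ gk p v x - K ψ gk p u x := by
      rw [e1]
      refine le_trans ?_ e2
      have h6 : (hi - ν) * (ε * K ψ gk p v x) ≤ (hi - ν) * Iv :=
        mul_le_mul_of_nonneg_left e3 (sub_nonneg.2 hνhi)
      have h7 : ε * ((hi - ν) * (ε * K ψ gk p v x)) ≤ ε * ((hi - ν) * Iv) :=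
        mul_le_mul_of_nonneg_left h6 hε0.le
      nlinarith [h7, hIu_eq]
    nlinarith [e5]
  have key_lb : ∀ x, (ε ^ 2 * ν + (1 - ε ^ 2) * lo) * K ψ gk p v x ≤ K ψ gk p u x := by
    intro x
    have ediff : (fun z => gk z * (u z - lo * v z)) =
        fun z => gk z * u z - lo * (gk z * v z) := by funext z; ring
    have idiff : Integrable (fun z => gk z * (u z - lo * v z)) ψ := by
      rw [ediff]; exact igu.sub (igv.const_mul lo)
    have eint : ∫ z, gk z * (u z - lo * v z) ∂ψ = Iu - lo * Iv := by
      rw [ediff, integral_sub igu (igv.const_mul lo), integral_const_mul]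
    have e1 : K ψ gk p u x - lo * K ψ gk p v x
        = ∫ z, gk z * p x z * (u z - lo * v z) ∂ψ := by
      rw [show lo * K ψ gk p v x = ∫ z, lo * (gk z * p x z * v z) ∂ψ from
        (integral_const_mul _ _).symm, K, ← integral_sub (iKu x) ((iKv x).const_mul lo)]
      congr 1; funext z; ring
    have e2 : ε * (Iu - lo * Iv) ≤ ∫ z, gk z * p x z * (u z - lo * v z) ∂ψ := by
      have h1 : ∫ z, ε * (gk z * (u z - lo * v z)) ∂ψ
          ≤ ∫ z, gk z * p x z * (u z - lo * v z) ∂ψ := by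
        refine integral_mono (idiff.const_mul _) ?_ (fun z => ?_)
        · have : (fun z => gk z * p x z * (u z - lo * v z)) =
              fun z => gk z * p x z * u z - lo * (gk z * p x z * v z) := by funext z; ring
          rw [this]; exact (iKu x).sub ((iKv x).const_mul lo)
        · have hnn : 0 ≤ gk z * (u z - lo * v z) :=
            mul_nonneg (hgkpos z).le (by linarith [(hsand z).1])
          have := mul_le_mul_of_nonneg_left (hp x z).1 hnn
          nlinarith [this]
      rwa [integral_const_mul, eint] at h1
    have e3 : ε * K ψ gk p v x ≤ Iv := by
      have := mul_le_mul_of_nonneg_left (hKv_ub x) hε0.le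
      nlinarith [this, mul_inv_cancel₀ hε0.ne']
    have e5 : ε * ((ν - lo) * (ε * K ψ gk p v x)) ≤ K ψ gk p u x - lo * K ψ gk p v x := by
      rw [e1]
      refine le_trans ?_ e2
      have h6 : (ν - lo) * (ε * K ψ gk p v x) ≤ (ν - lo) * Iv :=
        mul_le_mul_of_nonneg_left e3 (sub_nonneg.2 hνlo)
      have h7 : ε * ((ν - lo) * (ε * K ψ gk p v x)) ≤ ε * ((ν - lo) * Iv) :=
        mul_le_mul_of_nonneg_left h6 hε0.le
      nlinarith [h7, hIu_eq]
    nlinarith [e5]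
  refine ⟨ε ^ 2 * ν + (1 - ε ^ 2) * lo, ε ^ 2 * ν + (1 - ε ^ 2) * hi, ?_, ?_, by ring,
    ⟨K_measurable hgkm hpm hum, K_measurable hgkm hpm hvm, ⟨Bg * ε⁻¹ * Cu * (ψ Set.univ).toReal, ?_⟩,
      hKvpos, ⟨ε⁻¹ * Iv, hKv_ub⟩, fun x => ⟨key_lb x, key_ub x⟩⟩, hratio⟩
  · nlinarith [hνlo, sq_nonneg ε]
  · nlinarith [hνhi, sq_nonneg ε]
  · intro x
    have := norm_integral_le_of_norm_le_const (μ := ψ)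
      (f := fun z => gk z * p x z * u z) (C := Bg * ε⁻¹ * Cu)
      (ae_of_all _ fun z => by rw [Real.norm_eq_abs]; exact habs u Cu hCu x z)
    rw [Real.norm_eq_abs] at this
    exact this

noncomputable def U (ψ : Measure X) (g : ℕ → X → ℝ) (p : X → X → ℝ) (s : ℕ) :
    ℕ → (X → ℝ) → (X → ℝ)
  | 0 => id
  | n + 1 => if n + 1 ≤ s then id else (U ψ g p s n) ∘ (K ψ (g (n + 1)) p)

lemma U_id (ψ : Measure X) (g : ℕ → X → ℝ) (p : X → X → ℝ) {s n : ℕ} (h : n ≤ s)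
    (f : X → ℝ) : U ψ g p s n f = f := by
  cases n with
  | zero => rfl
  | succ m => simp only [U, if_pos h]; rfl

lemma U_succ (ψ : Measure X) (g : ℕ → X → ℝ) (p : X → X → ℝ) {s n : ℕ} (h : ¬ (n + 1 ≤ s))
    (f : X → ℝ) : U ψ g p s (n + 1) f = U ψ g p s n (K ψ (g (n + 1)) p f) := by
  simp only [U, if_neg h]; rfl

lemma U_sand {ψ : Measure X} [IsFiniteMeasure ψ] [Nonempty X] (hψ0 : ψ ≠ 0)
    {g : ℕ → X → ℝ} (hgm : ∀ k, Measurable (g k)) (hgpos : ∀ k x, 0 < g k x)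
    (hgbd : ∀ k, ∃ B, ∀ x, g k x ≤ B)
    {p : X → X → ℝ} (hpm : Measurable (Function.uncurry p))
    {ε : ℝ} (hε0 : 0 < ε) (hε1 : ε ≤ 1) (hp : ∀ x z, ε ≤ p x z ∧ p x z ≤ ε⁻¹)
    (s : ℕ) :
    ∀ n {lo hi : ℝ} {u v : X → ℝ}, Sand lo hi u v →
      ∃ lo' hi', lo ≤ lo' ∧ hi' ≤ hi ∧
        hi' - lo' ≤ (1 - ε ^ 2) ^ (n - s) * (hi - lo) ∧
        Sand lo' hi' (U ψ g p s n u) (U ψ g p s n v) ∧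
        (s < n → ∀ x x', U ψ g p s n v x ≤ ε⁻¹ ^ 2 * U ψ g p s n v x') := by
  intro n
  induction n with
  | zero =>
    intro lo hi u v h
    refine ⟨lo, hi, le_refl _, le_refl _, by simp, ?_, fun h' => absurd h' (by omega)⟩
    rw [U_id ψ g p (Nat.zero_le s), U_id ψ g p (Nat.zero_le s)]; exact h
  | succ n ih =>
    intro lo hi u v h
    by_cases hns : n + 1 ≤ s
    · refine ⟨lo, hi, le_refl _, le_refl _, ?_, ?_, fun h' => absurd h' (by omega)⟩
      · have h0 : n + 1 - s = 0 := by omega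
        rw [h0]; simp
      · rw [U_id ψ g p hns, U_id ψ g p hns]; exact h
    · obtain ⟨Bg, hBg⟩ := hgbd (n + 1)
      obtain ⟨lo₁, hi₁, h1, h2, h3, hs1, hr1⟩ :=
        K_step hψ0 (hgm (n + 1)) (hgpos (n + 1)) hBg hpm hε0 hε1 hp h
      obtain ⟨lo', hi', h1', h2', h3', hs', hr'⟩ := ih hs1
      refine ⟨lo', hi', le_trans h1 h1', le_trans h2' h2, ?_, ?_, ?_⟩
      · have hnsub : n + 1 - s = (n - s) + 1 := by omega
        have hbase : (0:ℝ) ≤ 1 - ε ^ 2 := by nlinarith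
        have hpow : (0:ℝ) ≤ (1 - ε ^ 2) ^ (n - s) := pow_nonneg hbase _
        calc hi' - lo' ≤ (1 - ε ^ 2) ^ (n - s) * (hi₁ - lo₁) := h3'
          _ = (1 - ε ^ 2) ^ (n - s) * ((1 - ε ^ 2) * (hi - lo)) := by rw [h3]
          _ = (1 - ε ^ 2) ^ (n + 1 - s) * (hi - lo) := by rw [hnsub, pow_succ]; ring
      · rw [U_succ ψ g p hns, U_succ ψ g p hns]; exact hs'
      · intro _ x x'
        rw [U_succ ψ g p hns]
        by_cases hsn' : s < n
        · exact hr' hsn' x x'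
        · have hns2 : n ≤ s := by omega
          rw [U_id ψ g p hns2]; exact hr1 x x'

lemma K_abs_bound {ψ : Measure X} [IsFiniteMeasure ψ] [Nonempty X]
    {gk : X → ℝ} (hgkm : Measurable gk) (hgkpos : ∀ x, 0 < gk x) {Bg : ℝ} (hBg : ∀ x, gk x ≤ Bg)
    {p : X → X → ℝ} (hpm : Measurable (Function.uncurry p))
    {ε : ℝ} (hε0 : 0 < ε) (hp : ∀ x z, ε ≤ p x z ∧ p x z ≤ ε⁻¹)
    {f : X → ℝ} {C : ℝ} (hfm : Measurable f) (hC : ∀ z, |f z| ≤ C) :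
    ∀ x, |K ψ gk p f x| ≤ Bg * ε⁻¹ * C * (ψ Set.univ).toReal := by
  have hBg0 : 0 < Bg := lt_of_lt_of_le (hgkpos (Classical.arbitrary X)) (hBg _)
  have habs : ∀ x z, |gk z * p x z * f z| ≤ Bg * ε⁻¹ * C := by
    intro x z
    have hpz0 : 0 < p x z := lt_of_lt_of_le hε0 (hp x z).1
    rw [abs_mul, abs_mul, abs_of_pos (hgkpos z), abs_of_pos hpz0]
    exact mul_le_mul (mul_le_mul (hBg z) (hp x z).2 hpz0.le hBg0.le) (hC z) (abs_nonneg _)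
      (by positivity)
  intro x
  have := norm_integral_le_of_norm_le_const (μ := ψ)
    (f := fun z => gk z * p x z * f z) (C := Bg * ε⁻¹ * C)
    (ae_of_all _ fun z => by rw [Real.norm_eq_abs]; exact habs x z)
  rw [Real.norm_eq_abs] at this
  exact this

lemma filterStep_eq {ψ : Measure X} [IsFiniteMeasure ψ] [Nonempty X] (hψ0 : ψ ≠ 0)
    {gk : X → ℝ} (hgkm : Measurable gk) (hgkpos : ∀ x, 0 < gk x) {Bg : ℝ} (hBg : ∀ x, gk x ≤ Bg)
    {p : X → X → ℝ} (hpm : Measurable (Function.uncurry p))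
    {ε : ℝ} (hε0 : 0 < ε) (hp : ∀ x z, ε ≤ p x z ∧ p x z ≤ ε⁻¹)
    (η : Measure X) [IsProbabilityMeasure η] :
    IsProbabilityMeasure (filterStep ψ gk p η) ∧
    ∀ (f : X → ℝ) (C : ℝ), Measurable f → (∀ x, |f x| ≤ C) →
      ∫ x, f x ∂(filterStep ψ gk p η) =
        (∫ x, K ψ gk p f x ∂η) / (∫ x, K ψ gk p (fun _ => 1) x ∂η) := by
  have hεinv : (0:ℝ) < ε⁻¹ := inv_pos.mpr hε0
  have hBg0 : 0 < Bg := lt_of_lt_of_le (hgkpos (Classical.arbitrary X)) (hBg _)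
  have hpm' : Measurable fun q : X × X => p q.1 q.2 := hpm
  have hq : Measurable fun z => ∫ x, p x z ∂η :=
    hpm'.stronglyMeasurable.integral_prod_left'.measurable
  have hpint : ∀ z, Integrable (fun x => p x z) η := by
    intro z
    refine integrable_of_bdd (hpm.comp measurable_prodMk_right) (C := ε⁻¹) (fun x => ?_)
    rw [abs_of_pos (lt_of_lt_of_le hε0 (hp x z).1)]; exact (hp x z).2
  have hqlb : ∀ z, ε ≤ ∫ x, p x z ∂η := by
    intro z
    have h1 : ∫ x, (ε:ℝ) ∂η ≤ ∫ x, p x z ∂η :=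
      integral_mono (integrable_const _) (hpint z) (fun x => (hp x z).1)
    simpa [measure_univ] using h1
  have hqub : ∀ z, ∫ x, p x z ∂η ≤ ε⁻¹ := by
    intro z
    have h1 : ∫ x, p x z ∂η ≤ ∫ x, (ε⁻¹:ℝ) ∂η :=
      integral_mono (hpint z) (integrable_const _) (fun x => (hp x z).2)
    simpa [measure_univ] using h1
  have hhm : Measurable fun z => gk z * ∫ x, p x z ∂η := hgkm.mul hq
  have hhpos : ∀ z, 0 < gk z * ∫ x, p x z ∂η :=
    fun z => mul_pos (hgkpos z) (lt_of_lt_of_le hε0 (hqlb z))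
  have hhub : ∀ z, |gk z * ∫ x, p x z ∂η| ≤ Bg * ε⁻¹ := by
    intro z
    rw [abs_of_pos (hhpos z)]
    exact mul_le_mul (hBg z) (hqub z) (le_trans hε0.le (hqlb z)) hBg0.le
  have hhint : Integrable (fun z => gk z * ∫ x, p x z ∂η) ψ := integrable_of_bdd hhm hhub
  have hIh : 0 < ∫ z, gk z * ∫ x, p x z ∂η ∂ψ := integral_pos_of_pos hψ0 hhint hhpos
  have hwd : (ψ.withDensity fun z => ENNReal.ofReal (gk z * ∫ x, p x z ∂η)) Set.univ
      = ENNReal.ofReal (∫ z, gk z * ∫ x, p x z ∂η ∂ψ) := by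
    rw [withDensity_apply _ MeasurableSet.univ, setLIntegral_univ,
      ← ofReal_integral_eq_lintegral_ofReal hhint (ae_of_all _ fun z => (hhpos z).le)]
  have key : ∀ (f : X → ℝ) (C : ℝ), Measurable f → (∀ x, |f x| ≤ C) →
      ∫ z, f z * (gk z * ∫ x, p x z ∂η) ∂ψ = ∫ x, K ψ gk p f x ∂η := by
    intro f C hfm hfC
    have hFm : Measurable (Function.uncurry fun z x => gk z * p x z * f z) := by
      have : Measurable fun q : X × X => gk q.1 * p q.2 q.1 * f q.1 :=
        ((hgkm.comp measurable_fst).mul (hpm.comp (measurable_snd.prodMk measurable_fst))).mul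
          (hfm.comp measurable_fst)
      exact this
    have hFbd : ∀ q : X × X, |Function.uncurry (fun z x => gk z * p x z * f z) q|
        ≤ Bg * ε⁻¹ * C := by
      rintro ⟨z, x⟩
      have hpz0 : 0 < p x z := lt_of_lt_of_le hε0 (hp x z).1
      show |gk z * p x z * f z| ≤ Bg * ε⁻¹ * C
      rw [abs_mul, abs_mul, abs_of_pos (hgkpos z), abs_of_pos hpz0]
      exact mul_le_mul (mul_le_mul (hBg z) (hp x z).2 hpz0.le hBg0.le) (hfC z) (abs_nonneg _)
        (by positivity)
    have hint : Integrable (Function.uncurry fun z x => gk z * p x z * f z) (ψ.prod η) :=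
      integrable_of_bdd hFm hFbd
    have swap := integral_integral_swap hint
    calc ∫ z, f z * (gk z * ∫ x, p x z ∂η) ∂ψ
        = ∫ z, ∫ x, gk z * p x z * f z ∂η ∂ψ := by
          congr 1; funext z
          rw [show (fun x => gk z * p x z * f z) = fun x => (gk z * f z) * p x z from
            funext fun x => by ring, integral_const_mul]
          ring
      _ = ∫ x, ∫ z, gk z * p x z * f z ∂ψ ∂η := swap
      _ = ∫ x, K ψ gk p f x ∂η := rfl
  have hd : ∫ z, gk z * ∫ x, p x z ∂η ∂ψ = ∫ x, K ψ gk p (fun _ => 1) x ∂η := by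
    have h1 := key (fun _ => 1) 1 measurable_const (by norm_num)
    simpa using h1
  constructor
  · constructor
    show (((ψ.withDensity fun z => ENNReal.ofReal (gk z * ∫ x, p x z ∂η)) Set.univ)⁻¹ •
      ψ.withDensity fun z => ENNReal.ofReal (gk z * ∫ x, p x z ∂η)) Set.univ = 1
    rw [Measure.smul_apply, smul_eq_mul, hwd]
    exact ENNReal.inv_mul_cancel (ne_of_gt (ENNReal.ofReal_pos.mpr hIh)) ENNReal.ofReal_ne_top
  · intro f C hfm hfC
    show ∫ x, f x ∂((((ψ.withDensity fun z => ENNReal.ofReal (gk z * ∫ x, p x z ∂η)) Set.univ)⁻¹ •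
      ψ.withDensity fun z => ENNReal.ofReal (gk z * ∫ x, p x z ∂η))) = _
    rw [integral_smul_measure, hwd, ENNReal.toReal_inv, ENNReal.toReal_ofReal hIh.le]
    have hwdint : ∫ x, f x ∂(ψ.withDensity fun z => ENNReal.ofReal (gk z * ∫ x, p x z ∂η))
        = ∫ z, (gk z * ∫ x, p x z ∂η) * f z ∂ψ := by
      have hrfl : (fun z => ENNReal.ofReal (gk z * ∫ x, p x z ∂η))
          = fun z => (((gk z * ∫ x, p x z ∂η).toNNReal : ℝ≥0) : ℝ≥0∞) := rfl
      rw [hrfl, integral_withDensity_eq_integral_smul hhm.real_toNNReal f]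
      congr 1; funext z
      rw [NNReal.smul_def, Real.coe_toNNReal _ (hhpos z).le, smul_eq_mul]
    rw [hwdint, smul_eq_mul,
      show ∫ z, (gk z * ∫ x, p x z ∂η) * f z ∂ψ = ∫ z, f z * (gk z * ∫ x, p x z ∂η) ∂ψ from
        by congr 1; funext z; ring,
      key f C hfm hfC, hd, div_eq_inv_mul]

lemma filterIter_repr {ψ : Measure X} [IsFiniteMeasure ψ] [Nonempty X] (hψ0 : ψ ≠ 0)
    {g : ℕ → X → ℝ} (hgm : ∀ k, Measurable (g k)) (hgpos : ∀ k x, 0 < g k x)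
    (hgbd : ∀ k, ∃ B, ∀ x, g k x ≤ B)
    {p : X → X → ℝ} (hpm : Measurable (Function.uncurry p))
    {ε : ℝ} (hε0 : 0 < ε) (hε1 : ε ≤ 1) (hp : ∀ x z, ε ≤ p x z ∧ p x z ≤ ε⁻¹)
    (s : ℕ) :
    ∀ n (ρ : Measure X), IsProbabilityMeasure ρ →
      IsProbabilityMeasure (filterIter ψ g p s n ρ) ∧
      ∀ (f : X → ℝ) (C : ℝ), Measurable f → (∀ x, |f x| ≤ C) →
        ∫ x, f x ∂(filterIter ψ g p s n ρ) =
          (∫ x, U ψ g p s n f x ∂ρ) / (∫ x, U ψ g p s n (fun _ => 1) x ∂ρ) := by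
  have hone : Sand 1 1 (fun _ : X => (1:ℝ)) (fun _ : X => (1:ℝ)) :=
    ⟨measurable_const, measurable_const, ⟨1, fun _ => by norm_num⟩, fun _ => one_pos,
      ⟨1, fun _ => le_refl _⟩, fun _ => by norm_num⟩
  intro n
  induction n with
  | zero =>
    intro ρ hρ
    haveI := hρ
    refine ⟨hρ, fun f C hfm hfC => ?_⟩
    show ∫ x, f x ∂ρ = (∫ x, f x ∂ρ) / ∫ x, (1:ℝ) ∂ρ
    simp [measure_univ]
  | succ n ih =>
    intro ρ hρ
    haveI := hρ
    have hρ0 : ρ ≠ 0 := by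
      intro h0
      have h1 := measure_univ (μ := ρ)
      rw [h0] at h1; simp at h1
    by_cases hns : n + 1 ≤ s
    · have hit : filterIter ψ g p s (n + 1) ρ = ρ := by
        show (if n + 1 ≤ s then id else filterStep ψ (g (n + 1)) p ∘ filterIter ψ g p s n) ρ = ρ
        rw [if_pos hns]; rfl
      refine ⟨by rw [hit]; exact hρ, fun f C hfm hfC => ?_⟩
      rw [hit, U_id ψ g p hns, U_id ψ g p hns]
      show ∫ x, f x ∂ρ = (∫ x, f x ∂ρ) / ∫ x, (1:ℝ) ∂ρ
      simp [measure_univ]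
    · obtain ⟨hη, hηf⟩ := ih ρ hρ
      haveI := hη
      have hit : filterIter ψ g p s (n + 1) ρ
          = filterStep ψ (g (n + 1)) p (filterIter ψ g p s n ρ) := by
        show (if n + 1 ≤ s then id else filterStep ψ (g (n + 1)) p ∘ filterIter ψ g p s n) ρ = _
        rw [if_neg hns]; rfl
      obtain ⟨Bg, hBg⟩ := hgbd (n + 1)
      obtain ⟨hprob, hform⟩ :=
        filterStep_eq hψ0 (hgm (n + 1)) (hgpos (n + 1)) hBg hpm hε0 hp (filterIter ψ g p s n ρ)
      refine ⟨by rw [hit]; exact hprob, fun f C hfm hfC => ?_⟩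
      have hKfm := K_measurable (ψ := ψ) (hgm (n + 1)) hpm hfm
      have hK1m := K_measurable (ψ := ψ) (hgm (n + 1)) hpm (measurable_const : Measurable fun _ : X => (1:ℝ))
      have hKfb := K_abs_bound (ψ := ψ) (hgm (n + 1)) (hgpos (n + 1)) hBg hpm hε0 hp hfm hfC
      have hK1b := K_abs_bound (ψ := ψ) (hgm (n + 1)) (hgpos (n + 1)) hBg hpm hε0 hp
        (measurable_const : Measurable fun _ : X => (1:ℝ)) (C := 1) (fun _ => by norm_num)
      rw [hit, hform f C hfm hfC, hηf _ _ hKfm hKfb, hηf _ _ hK1m hK1b,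
        U_succ ψ g p hns f, U_succ ψ g p hns (fun _ => 1)]
      -- denominators positive
      obtain ⟨lo1, hi1, -, -, -, ⟨-, hv1m, -, hv1pos, ⟨Cv1, hCv1⟩, -⟩, -⟩ :=
        U_sand hψ0 hgm hgpos hgbd hpm hε0 hε1 hp s n hone
      have hKone : Sand 1 1 (K ψ (g (n + 1)) p (fun _ => 1)) (K ψ (g (n + 1)) p (fun _ => 1)) := by
        refine ⟨hK1m, hK1m, ⟨_, hK1b⟩, ?_, ⟨_, fun x => le_trans (le_abs_self _) (hK1b x)⟩,
          fun x => by constructor <;> simp⟩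
        intro x
        have hKint : Integrable (fun z => g (n+1) z * p x z * (fun _ : X => (1:ℝ)) z) ψ := by
          refine integrable_of_bdd
            (((hgm (n+1)).mul (hpm.comp measurable_prodMk_left)).mul measurable_const)
            (C := Bg * ε⁻¹) (fun z => ?_)
          have hpz0 : 0 < p x z := lt_of_lt_of_le hε0 (hp x z).1
          have hBg0 : 0 < Bg := lt_of_lt_of_le (hgpos (n+1) (Classical.arbitrary X)) (hBg _)
          simp only [mul_one]
          rw [abs_mul, abs_of_pos (hgpos (n+1) z), abs_of_pos hpz0]
          exact mul_le_mul (hBg z) (hp x z).2 hpz0.le hBg0.le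
        refine integral_pos_of_pos hψ0 hKint (fun z => ?_)
        have hpz0 : 0 < p x z := lt_of_lt_of_le hε0 (hp x z).1
        simpa using mul_pos (hgpos (n+1) z) hpz0
      obtain ⟨lo2, hi2, -, -, -, ⟨-, hv2m, -, hv2pos, ⟨Cv2, hCv2⟩, -⟩, -⟩ :=
        U_sand hψ0 hgm hgpos hgbd hpm hε0 hε1 hp s n hKone
      have hv1abs : ∀ x, |U ψ g p s n (fun _ => 1) x| ≤ Cv1 :=
        fun x => by rw [abs_of_pos (hv1pos x)]; exact hCv1 x
      have hv2abs : ∀ x, |U ψ g p s n (K ψ (g (n+1)) p (fun _ => 1)) x| ≤ Cv2 :=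
        fun x => by rw [abs_of_pos (hv2pos x)]; exact hCv2 x
      have hd1 : 0 < ∫ x, U ψ g p s n (fun _ => 1) x ∂ρ :=
        integral_pos_of_pos hρ0 (integrable_of_bdd hv1m hv1abs) hv1pos
      have hd2 : 0 < ∫ x, U ψ g p s n (K ψ (g (n+1)) p (fun _ => 1)) x ∂ρ :=
        integral_pos_of_pos hρ0 (integrable_of_bdd hv2m hv2abs) hv2pos
      rw [div_div_div_cancel_right₀ hd1.ne']

end FilterStabilityAux

open FilterStabilityAux

/-- Classical filter stability under two-sided mixing: if
`ε ≤ p(x,z) ≤ ε⁻¹`, then the filtering maps contract in total variation,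
`‖F_n ⋯ F_{s+1} ρ − F_n ⋯ F_{s+1} ρ'‖ ≤ ε⁻²(1 − ε²)^{n−s} ‖ρ − ρ'‖`. -/
theorem filter_stability_mixing {X : Type*} [MeasurableSpace X]
    (ψ : Measure X) [SigmaFinite ψ]
    (p : X → X → ℝ) (hpm : Measurable (Function.uncurry p))
    (ε : ℝ) (hε0 : 0 < ε) (hε1 : ε ≤ 1)
    (hp : ∀ x z, ε ≤ p x z ∧ p x z ≤ ε⁻¹)
    (hpnorm : ∀ x, ∫ z, p x z ∂ψ = 1)
    (g : ℕ → X → ℝ) (hgm : ∀ n, Measurable (g n))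
    (hgpos : ∀ n x, 0 < g n x) (hgbd : ∀ n, ∃ B : ℝ, ∀ x, g n x ≤ B)
    (ρ ρ' : Measure X) [IsProbabilityMeasure ρ] [IsProbabilityMeasure ρ']
    (s n : ℕ) (hsn : s < n)
    (t : ℝ)
    (ht : ∀ f : X → ℝ, Measurable f → (∀ x, |f x| ≤ 1) →
      |(∫ x, f x ∂ρ) - ∫ x, f x ∂ρ'| ≤ t) :
    ∀ f : X → ℝ, Measurable f → (∀ x, |f x| ≤ 1) →
      |(∫ x, f x ∂(filterIter ψ g p s n ρ)) -
          ∫ x, f x ∂(filterIter ψ g p s n ρ')|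
        ≤ ε⁻¹ ^ 2 * (1 - ε ^ 2) ^ (n - s) * t := by
  intro f hfm hf1
  -- X is nonempty
  have hX : Nonempty X := by
    by_contra hX
    have h0 : ρ Set.univ = 0 := by
      rw [Set.univ_eq_empty_iff.mpr (not_nonempty_iff.mp hX)]; exact measure_empty
    rw [measure_univ] at h0; exact one_ne_zero h0
  haveI := hX
  have x₀ : X := Classical.arbitrary X
  have hint : Integrable (fun z => p x₀ z) ψ := by
    by_contra hni
    have h1 := hpnorm x₀
    rw [integral_undef hni] at h1
    exact one_ne_zero h1.symm
  have hψfin : IsFiniteMeasure ψ := by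
    constructor
    by_contra htop
    have htop' : ψ Set.univ = ⊤ := by
      by_contra h'
      exact htop (lt_top_iff_ne_top.mpr h')
    have h1 : ∫⁻ z, ENNReal.ofReal (p x₀ z) ∂ψ = ENNReal.ofReal 1 := by
      rw [← ofReal_integral_eq_lintegral_ofReal hint
        (ae_of_all _ fun z => le_trans hε0.le (hp x₀ z).1), hpnorm x₀]
    have h2 : ENNReal.ofReal ε * ψ Set.univ ≤ ∫⁻ z, ENNReal.ofReal (p x₀ z) ∂ψ := by
      rw [← lintegral_const]
      exact lintegral_mono fun z => ENNReal.ofReal_le_ofReal (hp x₀ z).1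
    rw [htop', ENNReal.mul_top (ENNReal.ofReal_pos.mpr hε0).ne', h1] at h2
    exact ENNReal.ofReal_ne_top (top_le_iff.mp h2)
  haveI := hψfin
  have hψ0 : ψ ≠ 0 := by
    intro h0
    have h1 := hpnorm x₀
    rw [h0, integral_zero_measure] at h1
    exact one_ne_zero h1.symm
  have hρ0 : ρ ≠ 0 := by
    intro h0
    have h1 := measure_univ (μ := ρ)
    rw [h0] at h1; simp at h1
  have hρ'0 : ρ' ≠ 0 := by
    intro h0
    have h1 := measure_univ (μ := ρ')
    rw [h0] at h1; simp at h1
  obtain ⟨-, hρrep⟩ := filterIter_repr hψ0 hgm hgpos hgbd hpm hε0 hε1 hp s n ρ inferInstance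
  obtain ⟨-, hρ'rep⟩ := filterIter_repr hψ0 hgm hgpos hgbd hpm hε0 hε1 hp s n ρ' inferInstance
  rw [hρrep f 1 hfm hf1, hρ'rep f 1 hfm hf1]
  have hS : Sand (-1) 1 f (fun _ : X => (1:ℝ)) :=
    ⟨hfm, measurable_const, ⟨1, hf1⟩, fun _ => one_pos, ⟨1, fun _ => le_refl _⟩,
      fun x => ⟨by simpa using (abs_le.mp (hf1 x)).1, by simpa using (abs_le.mp (hf1 x)).2⟩⟩
  obtain ⟨lo, hi, hlo1, hhi1, hcontr, ⟨hum, hvm, ⟨Cu, hCu⟩, hvpos, ⟨Cv, hCv⟩, hsand⟩, hrat⟩ :=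
    U_sand hψ0 hgm hgpos hgbd hpm hε0 hε1 hp s n hS
  set u := U ψ g p s n f with hu_def
  set v := U ψ g p s n (fun _ : X => (1:ℝ)) with hv_def
  have hvabs : ∀ x, |v x| ≤ Cv := fun x => by rw [abs_of_pos (hvpos x)]; exact hCv x
  have huiρ : Integrable u ρ := integrable_of_bdd hum hCu
  have huiρ' : Integrable u ρ' := integrable_of_bdd hum hCu
  have hviρ : Integrable v ρ := integrable_of_bdd hvm hvabs
  have hviρ' : Integrable v ρ' := integrable_of_bdd hvm hvabs
  set b := ∫ x, v x ∂ρ with hb_def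
  set b' := ∫ x, v x ∂ρ' with hb'_def
  have hb : 0 < b := integral_pos_of_pos hρ0 hviρ hvpos
  have hb' : 0 < b' := integral_pos_of_pos hρ'0 hviρ' hvpos
  set c := (∫ x, u x ∂ρ') / b' with hc_def
  have hclo : lo ≤ c := by
    rw [hc_def, le_div_iff₀ hb']
    have h1 : ∫ x, lo * v x ∂ρ' ≤ ∫ x, u x ∂ρ' :=
      integral_mono (hviρ'.const_mul lo) huiρ' (fun x => (hsand x).1)
    rwa [integral_const_mul] at h1
  have hchi : c ≤ hi := by
    rw [hc_def, div_le_iff₀ hb']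
    have h1 : ∫ x, u x ∂ρ' ≤ ∫ x, hi * v x ∂ρ' :=
      integral_mono huiρ' (hviρ'.const_mul hi) (fun x => (hsand x).2)
    rwa [integral_const_mul] at h1
  have hvV : ∀ x, v x ≤ ε⁻¹ ^ 2 * b := by
    intro x
    have h2 : ∫ _, v x ∂ρ ≤ ∫ x', ε⁻¹ ^ 2 * v x' ∂ρ :=
      integral_mono (integrable_const _) (hviρ.const_mul _) (fun x' => hrat hsn x x')
    rwa [integral_const, integral_const_mul, probReal_univ, one_smul] at h2
  have hV0 : 0 < ε⁻¹ ^ 2 * b := by positivity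
  set V := ε⁻¹ ^ 2 * b with hV_def
  set R := (hi - lo) * V / 2 with hR_def
  set m := ((hi - c) * V - (c - lo) * V) / 2 with hm_def
  have hhm : Measurable fun x => u x - c * v x := hum.sub (hvm.const_mul c)
  have hhiρ : Integrable (fun x => u x - c * v x) ρ := huiρ.sub (hviρ.const_mul c)
  have hhiρ' : Integrable (fun x => u x - c * v x) ρ' := huiρ'.sub (hviρ'.const_mul c)
  have hbd : ∀ x, |u x - c * v x - m| ≤ R := by
    intro x
    have h1 : u x - c * v x ≤ (hi - c) * V := by
      nlinarith [(hsand x).2, hvV x, hvpos x, mul_nonneg (sub_nonneg.2 hchi)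
        (sub_nonneg.2 (hvV x))]
    have h2 : -((c - lo) * V) ≤ u x - c * v x := by
      nlinarith [(hsand x).1, hvV x, hvpos x, mul_nonneg (sub_nonneg.2 hclo)
        (sub_nonneg.2 (hvV x))]
    rw [abs_le, hm_def, hR_def]
    constructor <;> nlinarith [h1, h2]
  have ht0 : 0 ≤ t := by
    have := ht (fun _ => 0) measurable_const (by norm_num)
    simpa using this
  have hlohi : lo ≤ hi := le_trans hclo hchi
  have hRnn : 0 ≤ R := by
    rw [hR_def]
    exact div_nonneg (mul_nonneg (sub_nonneg.2 hlohi) hV0.le) (by norm_num)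
  have hρ'h : ∫ x, (u x - c * v x) ∂ρ' = 0 := by
    rw [integral_sub huiρ' (hviρ'.const_mul c), integral_const_mul, hc_def,
      div_mul_cancel₀ _ hb'.ne', sub_self]
  have hρh : |∫ x, (u x - c * v x) ∂ρ| ≤ t * R := by
    rcases eq_or_lt_of_le hRnn with hR0 | hRpos
    · have hhx : ∀ x, u x - c * v x = m := by
        intro x
        have h1 := hbd x
        rw [← hR0] at h1
        have h2 : |u x - c * v x - m| = 0 := le_antisymm h1 (abs_nonneg _)
        have := abs_eq_zero.mp h2
        linarith
      have he : ∫ x, (u x - c * v x) ∂ρ = m := by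
        rw [show (fun x => u x - c * v x) = fun _ => m from funext hhx]
        simp [measure_univ]
      have hm0 : m = 0 := by
        rw [show (fun x => u x - c * v x) = fun _ => m from funext hhx] at hρ'h
        simpa [measure_univ] using hρ'h
      rw [he, hm0, abs_zero]
      exact mul_nonneg ht0 hRnn
    · have happ := ht (fun x => (u x - c * v x - m) / R)
        ((hhm.sub measurable_const).div_const R)
        (fun x => by
          rw [abs_div, abs_of_pos hRpos]
          exact div_le_one_of_le₀ (hbd x) hRpos.le)
      have e1 : ∀ (μ : Measure X), IsProbabilityMeasure μ →
          Integrable (fun x => u x - c * v x) μ →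
          ∫ x, (u x - c * v x - m) / R ∂μ = ((∫ x, (u x - c * v x) ∂μ) - m) / R := by
        intro μ hμ hintμ
        haveI := hμ
        rw [integral_div, integral_sub hintμ (integrable_const _), integral_const]
        simp [measure_univ]
      rw [e1 ρ inferInstance hhiρ, e1 ρ' inferInstance hhiρ', div_sub_div_same, abs_div,
        abs_of_pos hRpos, div_le_iff₀ hRpos] at happ
      calc |∫ x, (u x - c * v x) ∂ρ|
          = |(∫ x, (u x - c * v x) ∂ρ) - m - ((∫ x, (u x - c * v x) ∂ρ') - m)| := by
            rw [hρ'h]; congr 1; ring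
        _ ≤ t * R := happ
  have hΔ : (∫ x, u x ∂ρ) / b - (∫ x, u x ∂ρ') / b' = (∫ x, (u x - c * v x) ∂ρ) / b := by
    have he : ∫ x, (u x - c * v x) ∂ρ = (∫ x, u x ∂ρ) - c * b := by
      rw [integral_sub huiρ (hviρ.const_mul c), integral_const_mul]
    rw [he, hc_def]
    field_simp
  rw [hΔ, abs_div, abs_of_pos hb, div_le_iff₀ hb]
  have hpow0 : (0:ℝ) ≤ (1 - ε ^ 2) ^ (n - s) := pow_nonneg (by nlinarith) _
  calc |∫ x, (u x - c * v x) ∂ρ| ≤ t * R := hρh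
    _ ≤ ε⁻¹ ^ 2 * (1 - ε ^ 2) ^ (n - s) * t * b := by
        rw [hR_def, hV_def]
        nlinarith [mul_le_mul_of_nonneg_left hcontr
          (show (0:ℝ) ≤ t * (ε⁻¹ ^ 2 * b) / 2 by positivity)]
end
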